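/- arXiv:1512.04713 — 5 statements merged into one kernel-verified Lean document; each statement's English description precedes it below -/
import Mathlib

section
/- A bounded linear operator T : E → F is weakly mid (p;q)-summing (sends ℓ_q^w(E) into ℓ_p^mid(F)) if and only if there is a constant B > 0 such that (Σ_{n=1}^∞ Σ_{j=1}^k |y_n*(T(x_j))|^p)^{1/p} ≤ B ‖(x_j)_{j=1}^k‖_{w,q} ‖(y_n*)‖_{w,p} for every k, all x_1,…,x_k ∈ E, and every (y_n*) ∈ ℓ_p^w(F*); moreover the least such B equals the operator norm of the induced map ℓ_q^w(E) → ℓ_p^mid(F). -/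
open Filter

noncomputable section

section Defs

variable {E : Type*}

/-- `x ∈ ℓ_p(E)`: absolutely `p`-summable sequences. -/
def MemLpSeq [NormedAddCommGroup E] (p : ℝ) (x : ℕ → E) : Prop :=
  Summable fun j => ‖x j‖ ^ p

/-- The `ℓ_p` norm `(Σ ‖x j‖^p)^(1/p)`. -/
def lpNorm [NormedAddCommGroup E] (p : ℝ) (x : ℕ → E) : ℝ :=
  (∑' j, ‖x j‖ ^ p) ^ (1 / p)

/-- `x ∈ ℓ_p^w(E)`: weakly `p`-summable sequences. -/
def WSummable [NormedAddCommGroup E] [NormedSpace ℝ E] (p : ℝ) (x : ℕ → E) : Prop :=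
  ∀ f : E →L[ℝ] ℝ, Summable fun j => |f (x j)| ^ p

/-- The weak `ℓ_p` norm `sup_{‖f‖ ≤ 1} (Σ |f (x j)|^p)^(1/p)`. -/
def wNorm [NormedAddCommGroup E] [NormedSpace ℝ E] (p : ℝ) (x : ℕ → E) : ℝ :=
  ⨆ f : {f : E →L[ℝ] ℝ // ‖f‖ ≤ 1}, (∑' j, |f.1 (x j)| ^ p) ^ (1 / p)

/-- `x ∈ ℓ_p^{mid}(E)`: mid `p`-summable sequences. -/
def MidSummable [NormedAddCommGroup E] [NormedSpace ℝ E] (p : ℝ) (x : ℕ → E) : Prop :=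
  WSummable p x ∧ ∀ xs : ℕ → E →L[ℝ] ℝ, WSummable p xs →
    Summable fun nj : ℕ × ℕ => |xs nj.1 (x nj.2)| ^ p

/-- The mid `ℓ_p` norm: sup over the unit ball of `ℓ_p^w(E*)` of the double `ℓ_p` sum. -/
def midNorm [NormedAddCommGroup E] [NormedSpace ℝ E] (p : ℝ) (x : ℕ → E) : ℝ :=
  ⨆ xs : {xs : ℕ → E →L[ℝ] ℝ // WSummable p xs ∧ wNorm p xs ≤ 1},
    (∑' nj : ℕ × ℕ, |xs.1 nj.1 (x nj.2)| ^ p) ^ (1 / p)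

/-- `x ∈ ℓ_p^u(E)`: unconditionally `p`-summable sequences (weak norms of tails tend to 0). -/
def USummable [NormedAddCommGroup E] [NormedSpace ℝ E] (p : ℝ) (x : ℕ → E) : Prop :=
  WSummable p x ∧ Tendsto (fun k => wNorm p fun j => x (j + k)) atTop (nhds 0)

/-- `x ∈ c₀₀(E)`: finitely supported sequences. -/
def FinSupp [Zero E] (x : ℕ → E) : Prop := ∃ N, ∀ j ≥ N, x j = 0

/-- Truncation of a sequence at index `k`. -/
def trunc [Zero E] (k : ℕ) (x : ℕ → E) : ℕ → E := fun j => if j < k then x j else 0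

end Defs

section Helpers

open scoped ENNReal

variable {G : Type*} [NormedAddCommGroup G] [NormedSpace ℝ G]

lemma term_nonneg (r : ℝ) (t : ℝ) : 0 ≤ |t| ^ r := Real.rpow_nonneg (abs_nonneg t) r

/-- Uniform boundedness: a weakly r-summable sequence has uniformly bounded weak sums. -/
lemma wsummable_bound {r : ℝ} (hr : 1 ≤ r) {x : ℕ → G} (hx : WSummable r x) :
    ∃ C : ℝ, 0 ≤ C ∧ ∀ f : G →L[ℝ] ℝ, ∑' j, |f (x j)| ^ r ≤ (C * ‖f‖) ^ r := by
  have hr0 : (0:ℝ) < r := lt_of_lt_of_le one_pos hr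
  have hrne : r ≠ 0 := ne_of_gt hr0
  set P : ℝ≥0∞ := ENNReal.ofReal r with hP
  haveI : Fact (1 ≤ P) := ⟨ENNReal.one_le_ofReal.2 hr⟩
  have hPt : P.toReal = r := ENNReal.toReal_ofReal hr0.le
  have hPt0 : (0:ℝ) < P.toReal := by rw [hPt]; exact hr0
  -- truncated image sequences
  set v : Finset ℕ → (G →L[ℝ] ℝ) → (ℕ → ℝ) := fun s f j => if j ∈ s then f (x j) else 0 with hv
  have hvmem : ∀ s f, Memℓp (v s f) P := by
    intro s f
    apply memℓp_gen
    apply summable_of_ne_finset_zero (s := s)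
    intro j hj
    have hz : v s f j = 0 := by simp [hv, hj]
    rw [hz, norm_zero, hPt]
    exact Real.zero_rpow hrne
  have hvsum : ∀ s f, ∑' j, ‖v s f j‖ ^ r = ∑ j ∈ s, |f (x j)| ^ r := by
    intro s f
    rw [tsum_eq_sum (s := s) (by intro j hj; simp [hv, hj, Real.zero_rpow hrne])]
    exact Finset.sum_congr rfl fun j hj => by simp [hv, hj, Real.norm_eq_abs]
  -- the continuous linear maps
  have hbd : ∀ s (f : G →L[ℝ] ℝ),
      ‖(⟨v s f, hvmem s f⟩ : lp (fun _ : ℕ => ℝ) P)‖ = (∑ j ∈ s, |f (x j)| ^ r) ^ (1/r) := by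
    intro s f
    calc ‖(⟨v s f, hvmem s f⟩ : lp (fun _ : ℕ => ℝ) P)‖
        = (∑' j, ‖v s f j‖ ^ r) ^ (1/r) := by rw [lp.norm_eq_tsum_rpow hPt0, hPt]
      _ = (∑ j ∈ s, |f (x j)| ^ r) ^ (1/r) := by rw [hvsum s f]
  set g : Finset ℕ → (G →L[ℝ] ℝ) →L[ℝ] lp (fun _ : ℕ => ℝ) P := fun s =>
    LinearMap.mkContinuous
      { toFun := fun f => ⟨v s f, hvmem s f⟩
        map_add' := by
          intro f₁ f₂; apply Subtype.ext; funext j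
          show v s (f₁ + f₂) j = v s f₁ j + v s f₂ j
          by_cases hj : j ∈ s <;> simp [hv, hj]
        map_smul' := by
          intro c f; apply Subtype.ext; funext j
          show v s (c • f) j = c * v s f j
          by_cases hj : j ∈ s <;> simp [hv, hj] }
      ((∑ j ∈ s, ‖x j‖ ^ r) ^ (1/r))
      (by
        intro f
        simp only [LinearMap.coe_mk, AddHom.coe_mk]
        rw [hbd s f]
        have h1 : ∑ j ∈ s, |f (x j)| ^ r ≤ ‖f‖ ^ r * ∑ j ∈ s, ‖x j‖ ^ r := by
          rw [Finset.mul_sum]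
          apply Finset.sum_le_sum
          intro j hj
          calc |f (x j)| ^ r ≤ (‖f‖ * ‖x j‖) ^ r := by
                apply Real.rpow_le_rpow (abs_nonneg _) _ hr0.le
                exact f.le_opNorm (x j)
            _ = ‖f‖ ^ r * ‖x j‖ ^ r := Real.mul_rpow (norm_nonneg _) (norm_nonneg _)
        calc (∑ j ∈ s, |f (x j)| ^ r) ^ (1/r) ≤ (‖f‖ ^ r * ∑ j ∈ s, ‖x j‖ ^ r) ^ (1/r) := by
              apply Real.rpow_le_rpow (Finset.sum_nonneg fun j _ => term_nonneg r _) h1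
              positivity
          _ = (‖f‖ ^ r) ^ (1/r) * (∑ j ∈ s, ‖x j‖ ^ r) ^ (1/r) := by
              apply Real.mul_rpow (by positivity) (Finset.sum_nonneg fun j _ => by positivity)
          _ = (∑ j ∈ s, ‖x j‖ ^ r) ^ (1/r) * ‖f‖ := by
              rw [one_div, Real.rpow_rpow_inv (norm_nonneg f) hrne, mul_comm]) with hgdef
  have hgnorm : ∀ s f, ‖g s f‖ = (∑ j ∈ s, |f (x j)| ^ r) ^ (1/r) := fun s f => hbd s f
  obtain ⟨C', hC'⟩ := banach_steinhaus (g := g) (by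
    intro f
    refine ⟨(∑' j, |f (x j)| ^ r) ^ (1/r), fun s => ?_⟩
    rw [hgnorm s f]
    apply Real.rpow_le_rpow (Finset.sum_nonneg fun j _ => term_nonneg r _)
      (Summable.sum_le_tsum s (fun j _ => term_nonneg r _) (hx f)) (by positivity))
  refine ⟨max C' 0, le_max_right _ _, fun f => ?_⟩
  apply Summable.tsum_le_of_sum_le (hx f)
  intro s
  have h2 : ‖g s f‖ ≤ max C' 0 * ‖f‖ := by
    calc ‖g s f‖ ≤ ‖g s‖ * ‖f‖ := (g s).le_opNorm f
      _ ≤ max C' 0 * ‖f‖ :=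
        mul_le_mul_of_nonneg_right (le_trans (hC' s) (le_max_left _ _)) (norm_nonneg f)
  rw [hgnorm s f] at h2
  calc ∑ j ∈ s, |f (x j)| ^ r
      = ((∑ j ∈ s, |f (x j)| ^ r) ^ (1/r)) ^ r := by
        rw [one_div, Real.rpow_inv_rpow (Finset.sum_nonneg fun j _ => term_nonneg r _) hrne]
    _ ≤ (max C' 0 * ‖f‖) ^ r :=
        Real.rpow_le_rpow (by positivity) h2 hr0.le

lemma wNorm_nonneg (r : ℝ) (x : ℕ → G) : 0 ≤ wNorm r x :=
  Real.iSup_nonneg fun f => Real.rpow_nonneg (tsum_nonneg fun j => term_nonneg r _) _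

lemma wNorm_bound {r : ℝ} (hr : 1 ≤ r) {x : ℕ → G} (hx : WSummable r x) (f : G →L[ℝ] ℝ) :
    ∑' j, |f (x j)| ^ r ≤ (wNorm r x) ^ r * ‖f‖ ^ r := by
  have hr0 : (0:ℝ) < r := lt_of_lt_of_le one_pos hr
  have hrne : r ≠ 0 := ne_of_gt hr0
  obtain ⟨C, hC0, hC⟩ := wsummable_bound hr hx
  have hW0 : 0 ≤ wNorm r x := wNorm_nonneg r x
  have hbdd : BddAbove (Set.range fun f : {f : G →L[ℝ] ℝ // ‖f‖ ≤ 1} =>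
      (∑' j, |f.1 (x j)| ^ r) ^ (1 / r)) := by
    refine ⟨C, ?_⟩
    rintro _ ⟨g, rfl⟩
    calc (∑' j, |g.1 (x j)| ^ r) ^ (1/r) ≤ ((C * ‖g.1‖) ^ r) ^ (1/r) := by
          apply Real.rpow_le_rpow (tsum_nonneg fun j => term_nonneg r _) (hC g.1) (by positivity)
      _ = C * ‖g.1‖ := by rw [one_div, Real.rpow_rpow_inv (by positivity) hrne]
      _ ≤ C * 1 := mul_le_mul_of_nonneg_left g.2 hC0
      _ = C := mul_one C
  have hunit : ∀ g : G →L[ℝ] ℝ, ‖g‖ ≤ 1 → ∑' j, |g (x j)| ^ r ≤ (wNorm r x) ^ r := by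
    intro g hg
    have h1 : (∑' j, |g (x j)| ^ r) ^ (1/r) ≤ wNorm r x :=
      le_ciSup hbdd (⟨g, hg⟩ : {f : G →L[ℝ] ℝ // ‖f‖ ≤ 1})
    calc ∑' j, |g (x j)| ^ r
        = ((∑' j, |g (x j)| ^ r) ^ (1/r)) ^ r := by
          rw [one_div, Real.rpow_inv_rpow (tsum_nonneg fun j => term_nonneg r _) hrne]
      _ ≤ (wNorm r x) ^ r := Real.rpow_le_rpow
          (Real.rpow_nonneg (tsum_nonneg fun j => term_nonneg r _) _) h1 hr0.le
  by_cases hf : f = 0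
  · subst hf
    simp only [ContinuousLinearMap.zero_apply, abs_zero, Real.zero_rpow hrne, tsum_zero]
    exact mul_nonneg (Real.rpow_nonneg hW0 r) (Real.rpow_nonneg (norm_nonneg _) r)
  · have hfn : (0:ℝ) < ‖f‖ := norm_pos_iff.2 hf
    set g : G →L[ℝ] ℝ := ‖f‖⁻¹ • f with hgdef
    have hg1 : ‖g‖ ≤ 1 := by
      rw [hgdef, norm_smul (‖f‖⁻¹) f]
      simp [abs_of_nonneg (inv_nonneg.2 hfn.le), inv_mul_cancel₀ hfn.ne']
    have happ : ∀ j, |f (x j)| ^ r = ‖f‖ ^ r * |g (x j)| ^ r := by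
      intro j
      have h2 : g (x j) = ‖f‖⁻¹ * f (x j) := rfl
      rw [h2, abs_mul, abs_of_nonneg (inv_nonneg.2 hfn.le),
        Real.mul_rpow (by positivity) (abs_nonneg _), ← mul_assoc,
        ← Real.mul_rpow hfn.le (by positivity), mul_inv_cancel₀ hfn.ne', Real.one_rpow, one_mul]
    calc ∑' j, |f (x j)| ^ r = ∑' j, ‖f‖ ^ r * |g (x j)| ^ r := by simp only [happ]
      _ = ‖f‖ ^ r * ∑' j, |g (x j)| ^ r := tsum_mul_left
      _ ≤ ‖f‖ ^ r * (wNorm r x) ^ r :=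
          mul_le_mul_of_nonneg_left (hunit g hg1) (by positivity)
      _ = (wNorm r x) ^ r * ‖f‖ ^ r := mul_comm _ _

lemma wsummable_trunc {r : ℝ} (hrne : r ≠ 0) (k : ℕ) (x : ℕ → G) : WSummable r (trunc k x) := by
  intro f
  apply summable_of_ne_finset_zero (s := Finset.range k)
  intro j hj
  rw [Finset.mem_range, not_lt] at hj
  simp [trunc, not_lt.2 hj, Real.zero_rpow hrne]

lemma tsum_trunc_eq {r : ℝ} (hrne : r ≠ 0) (k : ℕ) (x : ℕ → G) (f : G →L[ℝ] ℝ) :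
    ∑' j, |f (trunc k x j)| ^ r = ∑ j ∈ Finset.range k, |f (x j)| ^ r := by
  rw [tsum_eq_sum (s := Finset.range k) (by
    intro j hj
    rw [Finset.mem_range, not_lt] at hj
    simp [trunc, not_lt.2 hj, Real.zero_rpow hrne])]
  refine Finset.sum_congr rfl fun j hj => ?_
  rw [Finset.mem_range] at hj
  simp [trunc, hj]

lemma sum_range_le_wNorm_trunc {r : ℝ} (hr : 1 ≤ r) (k : ℕ) (x : ℕ → G) (f : G →L[ℝ] ℝ) :
    ∑ j ∈ Finset.range k, |f (x j)| ^ r ≤ (wNorm r (trunc k x)) ^ r * ‖f‖ ^ r := by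
  have hrne : r ≠ 0 := ne_of_gt (lt_of_lt_of_le one_pos hr)
  rw [← tsum_trunc_eq hrne k x f]
  exact wNorm_bound hr (wsummable_trunc hrne k x) f

lemma wNorm_trunc_le {r : ℝ} (hr : 1 ≤ r) (k : ℕ) {x : ℕ → G} (hx : WSummable r x) :
    wNorm r (trunc k x) ≤ wNorm r x := by
  have hr0 : (0:ℝ) < r := lt_of_lt_of_le one_pos hr
  have hrne : r ≠ 0 := ne_of_gt hr0
  apply Real.iSup_le _ (wNorm_nonneg r x)
  rintro ⟨f, hf⟩
  have h1 : ∑' j, |f (trunc k x j)| ^ r ≤ (wNorm r x) ^ r := by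
    rw [tsum_trunc_eq hrne k x f]
    calc ∑ j ∈ Finset.range k, |f (x j)| ^ r
        ≤ ∑' j, |f (x j)| ^ r := Summable.sum_le_tsum _ (fun j _ => term_nonneg r _) (hx f)
      _ ≤ (wNorm r x) ^ r * ‖f‖ ^ r := wNorm_bound hr hx f
      _ ≤ (wNorm r x) ^ r * 1 := by
          exact mul_le_mul_of_nonneg_left (Real.rpow_le_one (norm_nonneg f) hf hr0.le)
            (Real.rpow_nonneg (wNorm_nonneg r x) r)
      _ = (wNorm r x) ^ r := mul_one _
  calc (∑' j, |f (trunc k x j)| ^ r) ^ (1/r)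
      ≤ ((wNorm r x) ^ r) ^ (1/r) :=
        Real.rpow_le_rpow (tsum_nonneg fun j => term_nonneg r _) h1 (by positivity)
    _ = wNorm r x := by rw [one_div, Real.rpow_rpow_inv (wNorm_nonneg r x) hrne]

lemma apply_eq_zero_of_wNorm_eq_zero {r : ℝ} (hr : 1 ≤ r) {x : ℕ → G} (hx : WSummable r x)
    (hW : wNorm r x = 0) (n : ℕ) : x n = 0 := by
  have hr0 : (0:ℝ) < r := lt_of_lt_of_le one_pos hr
  have hrne : r ≠ 0 := ne_of_gt hr0
  apply NormedSpace.eq_zero_of_forall_dual_eq_zero ℝ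
  intro f
  have h1 : ∑' j, |f (x j)| ^ r ≤ 0 := by
    have := wNorm_bound hr hx f
    rwa [hW, Real.zero_rpow hrne, zero_mul] at this
  have h2 : |f (x n)| ^ r ≤ 0 :=
    le_trans (Summable.le_tsum (hx f) n fun j _ => term_nonneg r _) h1
  by_contra hne
  have : 0 < |f (x n)| := abs_pos.2 hne
  exact absurd (Real.rpow_pos_of_pos this r) (not_lt.2 h2)

lemma summable_rpow_mono {q p : ℝ} {a : ℕ → ℝ} (hq0 : 0 < q) (hqp : q ≤ p)
    (h : Summable fun j => |a j| ^ q) : Summable fun j => |a j| ^ p := by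
  apply Summable.of_norm_bounded_eventually h
  have h0 : Tendsto (fun j => |a j| ^ q) cofinite (nhds 0) := h.tendsto_cofinite_zero
  filter_upwards [h0.eventually_lt_const one_pos] with j hj
  have ha1 : |a j| ≤ 1 := by
    by_contra hgt
    push_neg at hgt
    exact absurd (Real.one_le_rpow hgt.le hq0.le) (not_le.2 hj)
  rw [Real.norm_eq_abs, abs_of_nonneg (term_nonneg p _)]
  exact Real.rpow_le_rpow_of_exponent_ge' (abs_nonneg _) ha1 hq0.le hqp

lemma wsummable_mono {r s : ℝ} (hr : 0 < r) (hrs : r ≤ s) {x : ℕ → G} (hx : WSummable r x) :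
    WSummable s x := fun f => summable_rpow_mono hr hrs (hx f)

lemma wsummable_smul {r : ℝ} {x : ℕ → G} (hx : WSummable r x) (c : ℝ) :
    WSummable r fun j => c • x j := by
  intro f
  apply ((hx f).mul_left (|c| ^ r)).congr
  intro j
  rw [map_smul, smul_eq_mul, abs_mul, Real.mul_rpow (abs_nonneg _) (abs_nonneg _)]

section Main

variable {E F : Type*} [NormedAddCommGroup E] [NormedSpace ℝ E]
  [NormedAddCommGroup F] [NormedSpace ℝ F]

lemma summable_inner {p : ℝ} {y : ℕ → F →L[ℝ] ℝ} (hy : WSummable p y) (z : ℕ → F) (k : ℕ) :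
    Summable fun n => ∑ j ∈ Finset.range k, |y n (z j)| ^ p :=
  summable_sum fun j _ => hy (NormedSpace.inclusionInDoubleDual ℝ F (z j))

/-- Uniform bound on truncated weak norms. -/
lemma wNorm_trunc_le_const {r : ℝ} (hr : 1 ≤ r) {x : ℕ → G} {C : ℝ} (hC0 : 0 ≤ C)
    (hC : ∀ f : G →L[ℝ] ℝ, ∑' j, |f (x j)| ^ r ≤ (C * ‖f‖) ^ r) (hx : WSummable r x) (k : ℕ) :
    wNorm r (trunc k x) ≤ C := by
  have hr0 : (0:ℝ) < r := lt_of_lt_of_le one_pos hr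
  have hrne : r ≠ 0 := ne_of_gt hr0
  apply Real.iSup_le _ hC0
  rintro ⟨f, hf⟩
  calc (∑' j, |f (trunc k x j)| ^ r) ^ (1/r)
      = (∑ j ∈ Finset.range k, |f (x j)| ^ r) ^ (1/r) := by rw [tsum_trunc_eq hrne k x f]
    _ ≤ (∑' j, |f (x j)| ^ r) ^ (1/r) :=
        Real.rpow_le_rpow (Finset.sum_nonneg fun j _ => term_nonneg r _)
          (Summable.sum_le_tsum _ (fun j _ => term_nonneg r _) (hx f)) (by positivity)
    _ ≤ ((C * ‖f‖) ^ r) ^ (1/r) :=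
        Real.rpow_le_rpow (tsum_nonneg fun j => term_nonneg r _) (hC f) (by positivity)
    _ = C * ‖f‖ := by
        rw [one_div, Real.rpow_rpow_inv (mul_nonneg hC0 (norm_nonneg f)) hrne]
    _ ≤ C * 1 := mul_le_mul_of_nonneg_left hf hC0
    _ = C := mul_one C

/-- Key: the `B`-inequality gives summability of the double series. -/
lemma double_summable {p q : ℝ} (hq : 1 ≤ q) (hqp : q ≤ p) (T : E →L[ℝ] F) {B : ℝ} (hB0 : 0 ≤ B)
    (hB : ∀ (k : ℕ) (x : ℕ → E) (y : ℕ → F →L[ℝ] ℝ), WSummable p y →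
        (∑' n : ℕ, ∑ j ∈ Finset.range k, |y n (T (x j))| ^ p) ^ (1 / p) ≤
          B * wNorm q (trunc k x) * wNorm p y)
    {x : ℕ → E} (hx : WSummable q x) {y : ℕ → F →L[ℝ] ℝ} (hy : WSummable p y) :
    Summable fun nj : ℕ × ℕ => |y nj.1 (T (x nj.2))| ^ p := by
  have hp1 : (1:ℝ) ≤ p := le_trans hq hqp
  have hp0 : (0:ℝ) < p := lt_of_lt_of_le one_pos hp1
  obtain ⟨Cx, hCx0, hCx⟩ := wsummable_bound hq hx
  have htr : ∀ k, wNorm q (trunc k x) ≤ Cx := wNorm_trunc_le_const hq hCx0 hCx hx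
  have hb0 : 0 ≤ wNorm p y := wNorm_nonneg p y
  apply summable_of_sum_le (c := (B * Cx * wNorm p y) ^ p) (fun nj => term_nonneg p _)
  intro u
  set k := (u.sup fun nj => max nj.1 nj.2) + 1 with hk
  have hsub : u ⊆ Finset.range k ×ˢ Finset.range k := by
    intro nj hnj
    have h1 : max nj.1 nj.2 ≤ u.sup fun nj => max nj.1 nj.2 :=
      Finset.le_sup (f := fun nj : ℕ × ℕ => max nj.1 nj.2) hnj
    rw [Finset.mem_product, Finset.mem_range, Finset.mem_range]
    exact ⟨Nat.lt_succ_of_le (le_trans (le_max_left _ _) h1),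
      Nat.lt_succ_of_le (le_trans (le_max_right _ _) h1)⟩
  calc ∑ nj ∈ u, |y nj.1 (T (x nj.2))| ^ p
      ≤ ∑ nj ∈ Finset.range k ×ˢ Finset.range k, |y nj.1 (T (x nj.2))| ^ p :=
        Finset.sum_le_sum_of_subset_of_nonneg hsub fun nj _ _ => term_nonneg p _
    _ = ∑ n ∈ Finset.range k, ∑ j ∈ Finset.range k, |y n (T (x j))| ^ p :=
        Finset.sum_product _ _ _
    _ ≤ ∑' n, ∑ j ∈ Finset.range k, |y n (T (x j))| ^ p :=
        Summable.sum_le_tsum _ (fun n _ => Finset.sum_nonneg fun j _ => term_nonneg p _)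
          (summable_inner hy _ k)
    _ = ((∑' n, ∑ j ∈ Finset.range k, |y n (T (x j))| ^ p) ^ (1/p)) ^ p := by
        rw [one_div, Real.rpow_inv_rpow
          (tsum_nonneg fun n => Finset.sum_nonneg fun j _ => term_nonneg p _) (ne_of_gt hp0)]
    _ ≤ (B * wNorm q (trunc k x) * wNorm p y) ^ p :=
        Real.rpow_le_rpow (Real.rpow_nonneg
          (tsum_nonneg fun n => Finset.sum_nonneg fun j _ => term_nonneg p _) _)
          (hB k x y hy) hp0.le
    _ ≤ (B * Cx * wNorm p y) ^ p := by
        apply Real.rpow_le_rpow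
          (mul_nonneg (mul_nonneg hB0 (wNorm_nonneg _ _)) hb0)
          (mul_le_mul_of_nonneg_right (mul_le_mul_of_nonneg_left (htr k) hB0) hb0) hp0.le

/-- Key: element bound from the `B`-inequality. -/
lemma element_le_of_B {p q : ℝ} (hq : 1 ≤ q) (hqp : q ≤ p) (T : E →L[ℝ] F) {B : ℝ} (hB0 : 0 ≤ B)
    (hB : ∀ (k : ℕ) (x : ℕ → E) (y : ℕ → F →L[ℝ] ℝ), WSummable p y →
        (∑' n : ℕ, ∑ j ∈ Finset.range k, |y n (T (x j))| ^ p) ^ (1 / p) ≤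
          B * wNorm q (trunc k x) * wNorm p y)
    {x : ℕ → E} (hx : WSummable q x) (hx1 : wNorm q x ≤ 1)
    {ys : ℕ → F →L[ℝ] ℝ} (hys : WSummable p ys) (hys1 : wNorm p ys ≤ 1) :
    (∑' nj : ℕ × ℕ, |ys nj.1 (T (x nj.2))| ^ p) ^ (1/p) ≤ B := by
  have hp1 : (1:ℝ) ≤ p := le_trans hq hqp
  have hp0 : (0:ℝ) < p := lt_of_lt_of_le one_pos hp1
  have hsum := double_summable hq hqp T hB0 hB hx hys
  have htsum : ∑' nj : ℕ × ℕ, |ys nj.1 (T (x nj.2))| ^ p ≤ B ^ p := by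
    apply Summable.tsum_le_of_sum_le hsum
    intro u
    set k := (u.sup fun nj => max nj.1 nj.2) + 1 with hk
    have hsub : u ⊆ Finset.range k ×ˢ Finset.range k := by
      intro nj hnj
      have h1 : max nj.1 nj.2 ≤ u.sup fun nj => max nj.1 nj.2 :=
        Finset.le_sup (f := fun nj : ℕ × ℕ => max nj.1 nj.2) hnj
      rw [Finset.mem_product, Finset.mem_range, Finset.mem_range]
      exact ⟨Nat.lt_succ_of_le (le_trans (le_max_left _ _) h1),
        Nat.lt_succ_of_le (le_trans (le_max_right _ _) h1)⟩
    calc ∑ nj ∈ u, |ys nj.1 (T (x nj.2))| ^ p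
        ≤ ∑ nj ∈ Finset.range k ×ˢ Finset.range k, |ys nj.1 (T (x nj.2))| ^ p :=
          Finset.sum_le_sum_of_subset_of_nonneg hsub fun nj _ _ => term_nonneg p _
      _ = ∑ n ∈ Finset.range k, ∑ j ∈ Finset.range k, |ys n (T (x j))| ^ p :=
          Finset.sum_product _ _ _
      _ ≤ ∑' n, ∑ j ∈ Finset.range k, |ys n (T (x j))| ^ p :=
          Summable.sum_le_tsum _ (fun n _ => Finset.sum_nonneg fun j _ => term_nonneg p _)
            (summable_inner hys _ k)
      _ = ((∑' n, ∑ j ∈ Finset.range k, |ys n (T (x j))| ^ p) ^ (1/p)) ^ p := by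
          rw [one_div, Real.rpow_inv_rpow
            (tsum_nonneg fun n => Finset.sum_nonneg fun j _ => term_nonneg p _) (ne_of_gt hp0)]
      _ ≤ (B * wNorm q (trunc k x) * wNorm p ys) ^ p :=
          Real.rpow_le_rpow (Real.rpow_nonneg
            (tsum_nonneg fun n => Finset.sum_nonneg fun j _ => term_nonneg p _) _)
            (hB k x ys hys) hp0.le
      _ ≤ (B * 1 * 1) ^ p := by
          apply Real.rpow_le_rpow
            (mul_nonneg (mul_nonneg hB0 (wNorm_nonneg _ _)) (wNorm_nonneg _ _))
            _ hp0.le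
          apply mul_le_mul (mul_le_mul_of_nonneg_left
            (le_trans (wNorm_trunc_le hq _ hx) hx1) hB0) hys1 (wNorm_nonneg _ _)
          exact mul_nonneg hB0 zero_le_one
      _ = B ^ p := by rw [mul_one, mul_one]
  calc (∑' nj : ℕ × ℕ, |ys nj.1 (T (x nj.2))| ^ p) ^ (1/p)
      ≤ (B ^ p) ^ (1/p) :=
        Real.rpow_le_rpow (tsum_nonneg fun nj => term_nonneg p _) htsum (by positivity)
    _ = B := by rw [one_div, Real.rpow_rpow_inv hB0 (ne_of_gt hp0)]

/-- Key: midNorm bound from the `B`-inequality. -/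
lemma midNorm_le_of_B {p q : ℝ} (hq : 1 ≤ q) (hqp : q ≤ p) (T : E →L[ℝ] F) {B : ℝ} (hB0 : 0 ≤ B)
    (hB : ∀ (k : ℕ) (x : ℕ → E) (y : ℕ → F →L[ℝ] ℝ), WSummable p y →
        (∑' n : ℕ, ∑ j ∈ Finset.range k, |y n (T (x j))| ^ p) ^ (1 / p) ≤
          B * wNorm q (trunc k x) * wNorm p y)
    {x : ℕ → E} (hx : WSummable q x) (hx1 : wNorm q x ≤ 1) :
    midNorm p (fun j => T (x j)) ≤ B := by
  apply Real.iSup_le _ hB0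
  rintro ⟨ys, hys, hys1⟩
  exact element_le_of_B hq hqp T hB0 hB hx hx1 hys hys1

end Main

lemma block_wsummable_prod {r : ℝ} (hr : 1 ≤ r) (w : ℕ → ℕ → G) {a : ℕ → ℝ}
    (ha : ∀ m, 0 < a m)
    (hw : ∀ m, WSummable r (w m))
    (hbound : ∀ m (f : G →L[ℝ] ℝ), ∑' j, |f (w m j)| ^ r ≤ (a m * ‖f‖) ^ r)
    (e : ℕ ≃ ℕ × ℕ) :
    WSummable r fun i => ((2:ℝ) ^ (e i).1 * a (e i).1)⁻¹ • w (e i).1 (e i).2 := by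
  have hr0 : (0:ℝ) < r := lt_of_lt_of_le one_pos hr
  intro f
  have key : Summable fun mj : ℕ × ℕ =>
      |f ((((2:ℝ) ^ mj.1 * a mj.1)⁻¹ • w mj.1 mj.2 : G))| ^ r := by
    rw [summable_prod_of_nonneg (fun mj => term_nonneg r _)]
    constructor
    · intro m
      exact (wsummable_smul (hw m) (((2:ℝ) ^ m * a m)⁻¹)) f
    · have hc : ∀ m : ℕ, (0:ℝ) < (2:ℝ) ^ m * a m := fun m => mul_pos (by positivity) (ha m)
      have hrow : ∀ m : ℕ, ∑' j, |f ((((2:ℝ) ^ m * a m)⁻¹ • w m j : G))| ^ r ≤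
          (1/2:ℝ) ^ m * ‖f‖ ^ r := by
        intro m
        have h1 : ∀ j, |f ((((2:ℝ) ^ m * a m)⁻¹ • w m j : G))| ^ r =
            (((2:ℝ) ^ m * a m)⁻¹) ^ r * |f (w m j)| ^ r := by
          intro j
          rw [map_smul, smul_eq_mul, abs_mul, abs_of_nonneg (inv_nonneg.2 (hc m).le),
            Real.mul_rpow (inv_nonneg.2 (hc m).le) (abs_nonneg _)]
        calc ∑' j, |f ((((2:ℝ) ^ m * a m)⁻¹ • w m j : G))| ^ r
            = (((2:ℝ) ^ m * a m)⁻¹) ^ r * ∑' j, |f (w m j)| ^ r := by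
              simp only [h1]; exact tsum_mul_left
          _ ≤ (((2:ℝ) ^ m * a m)⁻¹) ^ r * (a m * ‖f‖) ^ r := by
              apply mul_le_mul_of_nonneg_left (hbound m f)
              exact Real.rpow_nonneg (inv_nonneg.2 (hc m).le) r
          _ = ((((2:ℝ) ^ m * a m)⁻¹ * (a m * ‖f‖)) : ℝ) ^ r := by
              rw [← Real.mul_rpow (inv_nonneg.2 (hc m).le)
                (mul_nonneg (ha m).le (norm_nonneg f))]
          _ = (((2:ℝ) ^ m)⁻¹ * ‖f‖) ^ r := by
              congr 1
              field_simp [(ha m).ne']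
          _ = (((2:ℝ) ^ m)⁻¹) ^ r * ‖f‖ ^ r := by
              rw [Real.mul_rpow (by positivity) (norm_nonneg f)]
          _ ≤ (1/2:ℝ) ^ m * ‖f‖ ^ r := by
              apply mul_le_mul_of_nonneg_right _ (Real.rpow_nonneg (norm_nonneg f) r)
              calc (((2:ℝ) ^ m)⁻¹) ^ r ≤ (((2:ℝ) ^ m)⁻¹) ^ (1:ℝ) := by
                    apply Real.rpow_le_rpow_of_exponent_ge (by positivity) _ hr
                    rw [inv_le_one_iff₀]
                    right
                    exact one_le_pow₀ (by norm_num)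
                _ = ((2:ℝ) ^ m)⁻¹ := Real.rpow_one _
                _ = (1/2:ℝ) ^ m := by rw [one_div, inv_pow]
      apply Summable.of_nonneg_of_le (fun m => tsum_nonneg fun j => term_nonneg r _) hrow
      exact summable_geometric_two.mul_right _
  exact (Equiv.summable_iff e).2 key

section Main2

variable {E F : Type*} [NormedAddCommGroup E] [NormedSpace ℝ E]
  [NormedAddCommGroup F] [NormedSpace ℝ F]

lemma exists_B {p q : ℝ} (hq : 1 ≤ q) (hqp : q ≤ p) (T : E →L[ℝ] F)
    (H : ∀ x : ℕ → E, WSummable q x → MidSummable p fun j => T (x j)) :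
    ∃ B : ℝ, 0 < B ∧ ∀ (k : ℕ) (x : ℕ → E) (y : ℕ → F →L[ℝ] ℝ), WSummable p y →
        (∑' n : ℕ, ∑ j ∈ Finset.range k, |y n (T (x j))| ^ p) ^ (1 / p) ≤
          B * wNorm q (trunc k x) * wNorm p y := by
  have hp1 : (1:ℝ) ≤ p := le_trans hq hqp
  have hp0 : (0:ℝ) < p := lt_of_lt_of_le one_pos hp1
  have hpne : p ≠ 0 := ne_of_gt hp0
  have hq0 : (0:ℝ) < q := lt_of_lt_of_le one_pos hq
  have hqne : q ≠ 0 := ne_of_gt hq0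
  by_contra hcon
  push_neg at hcon
  have hsel : ∀ m : ℕ, ∃ (k : ℕ) (x : ℕ → E) (y : ℕ → F →L[ℝ] ℝ), WSummable p y ∧
      ((4:ℝ)^m * (m+1)) * wNorm q (trunc k x) * wNorm p y <
        (∑' n : ℕ, ∑ j ∈ Finset.range k, |y n (T (x j))| ^ p) ^ (1 / p) :=
    fun m => hcon ((4:ℝ)^m * (m+1)) (by positivity)
  choose k xx yy hyW hlt using hsel
  set a : ℕ → ℝ := fun m => wNorm q (trunc (k m) (xx m)) with hadef
  set b : ℕ → ℝ := fun m => wNorm p (yy m) with hbdef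
  set A : ℕ → ℝ := fun m =>
    ∑' n : ℕ, ∑ j ∈ Finset.range (k m), |yy m n (T (xx m j))| ^ p with hAdef
  have hA0 : ∀ m, 0 ≤ A m :=
    fun m => tsum_nonneg fun n => Finset.sum_nonneg fun j _ => term_nonneg p _
  have hBpos : ∀ m : ℕ, (0:ℝ) < (4:ℝ)^m * (m+1) := fun m => by positivity
  have hApos : ∀ m, 0 < (A m) ^ (1/p) := by
    intro m
    refine lt_of_le_of_lt ?_ (hlt m)
    exact mul_nonneg (mul_nonneg (hBpos m).le (wNorm_nonneg _ _)) (wNorm_nonneg _ _)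
  have ha : ∀ m, 0 < a m := by
    intro m
    rcases (wNorm_nonneg q (trunc (k m) (xx m))).lt_or_eq with h | h
    · exact h
    · exfalso
      have hzero : ∀ j, trunc (k m) (xx m) j = 0 := fun j =>
        apply_eq_zero_of_wNorm_eq_zero hq (wsummable_trunc hqne _ _) h.symm j
      have hxz : ∀ j, j < k m → xx m j = 0 := by
        intro j hj
        have h2 := hzero j
        rwa [show trunc (k m) (xx m) j = xx m j from by simp [trunc, hj]] at h2
      have hAz : A m = 0 := by
        have h3 : ∀ n : ℕ, ∑ j ∈ Finset.range (k m), |yy m n (T (xx m j))| ^ p = 0 := by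
          intro n
          apply Finset.sum_eq_zero
          intro j hj
          rw [Finset.mem_range] at hj
          rw [hxz j hj, map_zero, map_zero, abs_zero, Real.zero_rpow hpne]
        rw [hAdef]
        simp only [h3]
        exact tsum_zero
      have h4 := hApos m
      rw [hAz, Real.zero_rpow (one_div_ne_zero hpne)] at h4
      exact lt_irrefl 0 h4
  have hb : ∀ m, 0 < b m := by
    intro m
    rcases (wNorm_nonneg p (yy m)).lt_or_eq with h | h
    · exact h
    · exfalso
      have hzero : ∀ n, yy m n = 0 := fun n =>
        apply_eq_zero_of_wNorm_eq_zero hp1 (hyW m) h.symm n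
      have hAz : A m = 0 := by
        have h3 : ∀ n : ℕ, ∑ j ∈ Finset.range (k m), |yy m n (T (xx m j))| ^ p = 0 := by
          intro n
          apply Finset.sum_eq_zero
          intro j _
          rw [hzero n, ContinuousLinearMap.zero_apply, abs_zero, Real.zero_rpow hpne]
        rw [hAdef]
        simp only [h3]
        exact tsum_zero
      have h4 := hApos m
      rw [hAz, Real.zero_rpow (one_div_ne_zero hpne)] at h4
      exact lt_irrefl 0 h4
  have hAgt : ∀ m, ((4:ℝ)^m * (m+1) * a m * b m) ^ p < A m := by
    intro m
    calc ((4:ℝ)^m * (m+1) * a m * b m) ^ p < ((A m)^(1/p)) ^ p :=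
          Real.rpow_lt_rpow
            (mul_nonneg (mul_nonneg (hBpos m).le (ha m).le) (hb m).le) (hlt m) hp0
      _ = A m := by rw [one_div, Real.rpow_inv_rpow (hA0 m) hpne]
  have hkey : ∀ m, ∃ Nn : ℕ, ((4:ℝ)^m * (m+1) * a m * b m) ^ p <
      ∑ n ∈ Finset.range Nn, ∑ j ∈ Finset.range (k m), |yy m n (T (xx m j))| ^ p := by
    intro m
    have hsumin : Summable fun n => ∑ j ∈ Finset.range (k m), |yy m n (T (xx m j))| ^ p :=
      summable_inner (hyW m) _ _
    exact (hsumin.hasSum.tendsto_sum_nat.eventually (eventually_gt_nhds (hAgt m))).exists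
  choose N hN using hkey
  set e : ℕ ≃ ℕ × ℕ := (Denumerable.eqv (ℕ × ℕ)).symm with hedef
  set X : ℕ → E := fun i =>
    ((2:ℝ) ^ (e i).1 * a (e i).1)⁻¹ • trunc (k (e i).1) (xx (e i).1) (e i).2 with hX
  set Y : ℕ → F →L[ℝ] ℝ := fun i =>
    ((2:ℝ) ^ (e i).1 * b (e i).1)⁻¹ • trunc (N (e i).1) (yy (e i).1) (e i).2 with hY
  have hXw : WSummable q X := by
    apply block_wsummable_prod hq (fun m => trunc (k m) (xx m)) ha
      (fun m => wsummable_trunc hqne _ _)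
    intro m f
    calc ∑' j, |f (trunc (k m) (xx m) j)| ^ q
        ≤ (a m) ^ q * ‖f‖ ^ q := wNorm_bound hq (wsummable_trunc hqne _ _) f
      _ = (a m * ‖f‖) ^ q := (Real.mul_rpow (ha m).le (norm_nonneg f)).symm
  have hYw : WSummable p Y := by
    apply block_wsummable_prod hp1 (fun m => trunc (N m) (yy m)) hb
      (fun m => wsummable_trunc hpne _ _)
    intro m f
    calc ∑' j, |f (trunc (N m) (yy m) j)| ^ p
        ≤ (wNorm p (trunc (N m) (yy m))) ^ p * ‖f‖ ^ p :=
          wNorm_bound hp1 (wsummable_trunc hpne _ _) f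
      _ ≤ (b m) ^ p * ‖f‖ ^ p := by
          apply mul_le_mul_of_nonneg_right _ (Real.rpow_nonneg (norm_nonneg f) p)
          exact Real.rpow_le_rpow (wNorm_nonneg _ _) (wNorm_trunc_le hp1 _ (hyW m)) hp0.le
      _ = (b m * ‖f‖) ^ p := (Real.mul_rpow (hb m).le (norm_nonneg f)).symm
  have hdouble := (H X hXw).2 Y hYw
  set D : ℕ → Finset (ℕ × ℕ) := fun m =>
    ((Finset.range (N m)).image fun n => e.symm (m, n)) ×ˢ
      ((Finset.range (k m)).image fun j => e.symm (m, j)) with hD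
  have hDsum : ∀ m : ℕ, (m+1:ℝ) < ∑ nj ∈ D m, |Y nj.1 (T (X nj.2))| ^ p := by
    intro m
    set cm : ℝ := ((2:ℝ) ^ m * a m)⁻¹ with hcm
    set dm : ℝ := ((2:ℝ) ^ m * b m)⁻¹ with hdm
    have hcm0 : 0 < cm := inv_pos.2 (mul_pos (by positivity) (ha m))
    have hdm0 : 0 < dm := inv_pos.2 (mul_pos (by positivity) (hb m))
    have hi1 : ∀ n₁ ∈ Finset.range (N m), ∀ n₂ ∈ Finset.range (N m),
        e.symm (m, n₁) = e.symm (m, n₂) → n₁ = n₂ := by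
      intro n₁ _ n₂ _ hh
      exact congrArg Prod.snd (e.symm.injective hh)
    have hi2 : ∀ n₁ ∈ Finset.range (k m), ∀ n₂ ∈ Finset.range (k m),
        e.symm (m, n₁) = e.symm (m, n₂) → n₁ = n₂ := by
      intro n₁ _ n₂ _ hh
      exact congrArg Prod.snd (e.symm.injective hh)
    have hterm : ∀ n ∈ Finset.range (N m), ∀ j ∈ Finset.range (k m),
        |Y (e.symm (m, n)) (T (X (e.symm (m, j))))| ^ p
          = (dm * cm) ^ p * |yy m n (T (xx m j))| ^ p := by
      intro n hn j hj
      rw [Finset.mem_range] at hn hj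
      have hYv : Y (e.symm (m, n)) = dm • yy m n := by
        rw [hY]
        simp only [Equiv.apply_symm_apply]
        rw [show trunc (N m) (yy m) n = yy m n from by simp [trunc, hn], hdm]
      have hXv : X (e.symm (m, j)) = cm • xx m j := by
        rw [hX]
        simp only [Equiv.apply_symm_apply]
        rw [show trunc (k m) (xx m) j = xx m j from by simp [trunc, hj], hcm]
      have hval : (Y (e.symm (m, n))) (T (X (e.symm (m, j))))
          = dm * (cm * (yy m n (T (xx m j)))) := by
        rw [hYv, hXv, map_smul, ContinuousLinearMap.smul_apply, map_smul]
        rw [smul_eq_mul, smul_eq_mul]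
      rw [hval, abs_mul, abs_mul, abs_of_pos hdm0, abs_of_pos hcm0, ← mul_assoc,
        Real.mul_rpow (mul_nonneg hdm0.le hcm0.le) (abs_nonneg _)]
    have hsum_eq : ∑ nj ∈ D m, |Y nj.1 (T (X nj.2))| ^ p =
        ∑ n ∈ Finset.range (N m), ∑ j ∈ Finset.range (k m),
          |Y (e.symm (m, n)) (T (X (e.symm (m, j))))| ^ p := by
      rw [hD]
      rw [Finset.sum_product, Finset.sum_image hi1]
      exact Finset.sum_congr rfl fun n _ => by rw [Finset.sum_image hi2]
    have hsum_eq2 : ∑ nj ∈ D m, |Y nj.1 (T (X nj.2))| ^ p =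
        (dm * cm) ^ p * ∑ n ∈ Finset.range (N m), ∑ j ∈ Finset.range (k m),
          |yy m n (T (xx m j))| ^ p := by
      rw [hsum_eq, Finset.mul_sum]
      refine Finset.sum_congr rfl fun n hn => ?_
      rw [Finset.mul_sum]
      exact Finset.sum_congr rfl fun j hj => hterm n hn j hj
    rw [hsum_eq2]
    calc (m+1:ℝ)
        ≤ ((m:ℝ)+1) ^ p := by
          have h5 : ((m:ℝ)+1) ^ (1:ℝ) ≤ ((m:ℝ)+1) ^ p :=
            Real.rpow_le_rpow_of_exponent_le (by linarith [Nat.cast_nonneg (α := ℝ) m]) hp1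
          rw [Real.rpow_one] at h5
          exact_mod_cast h5
      _ = (dm * cm * ((4:ℝ)^m * (m+1) * a m * b m)) ^ p := by
          congr 1
          have h4 : (4:ℝ)^m = 2^m * 2^m := by rw [← mul_pow]; norm_num
          have h2ne : ((2:ℝ)^m) ≠ 0 := by positivity
          rw [hcm, hdm, h4]
          have ea : ((2:ℝ) ^ m * a m) ≠ 0 := (mul_pos (by positivity) (ha m)).ne'
          have eb : ((2:ℝ) ^ m * b m) ≠ 0 := (mul_pos (by positivity) (hb m)).ne'
          have e1 : ((2:ℝ)^m * b m)⁻¹ * ((2:ℝ)^m * a m)⁻¹ *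
              ((2:ℝ)^m * (2:ℝ)^m * (↑m+1) * a m * b m)
              = (((2:ℝ)^m * b m)⁻¹ * ((2:ℝ)^m * b m)) *
                ((((2:ℝ)^m * a m)⁻¹ * ((2:ℝ)^m * a m)) * (↑m+1)) := by ring
          rw [e1, inv_mul_cancel₀ ea, inv_mul_cancel₀ eb]
          ring
      _ = (dm * cm) ^ p * ((4:ℝ)^m * (m+1) * a m * b m) ^ p :=
          Real.mul_rpow (mul_nonneg hdm0.le hcm0.le)
            (mul_nonneg (mul_nonneg (hBpos m).le (ha m).le) (hb m).le)
      _ < (dm * cm) ^ p * ∑ n ∈ Finset.range (N m), ∑ j ∈ Finset.range (k m),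
            |yy m n (T (xx m j))| ^ p := by
          exact mul_lt_mul_of_pos_left (hN m) (Real.rpow_pos_of_pos (mul_pos hdm0 hcm0) p)
  obtain ⟨M, hM⟩ := exists_nat_gt (∑' nj : ℕ × ℕ, |Y nj.1 (T (X nj.2))| ^ p)
  have hdisj : (↑(Finset.range M) : Set ℕ).PairwiseDisjoint D := by
    intro m₁ _ m₂ _ hne
    rw [Function.onFun, Finset.disjoint_left]
    intro z hz₁ hz₂
    apply hne
    have h1 : (e z.1).1 = m₁ := by
      rw [hD, Finset.mem_product] at hz₁
      obtain ⟨n, _, hn⟩ := Finset.mem_image.1 hz₁.1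
      rw [← hn, Equiv.apply_symm_apply]
    have h2 : (e z.1).1 = m₂ := by
      rw [hD, Finset.mem_product] at hz₂
      obtain ⟨n, _, hn⟩ := Finset.mem_image.1 hz₂.1
      rw [← hn, Equiv.apply_symm_apply]
    rw [← h1, h2]
  have hle1 : (M:ℝ) ≤ ∑ nj ∈ (Finset.range M).biUnion D, |Y nj.1 (T (X nj.2))| ^ p := by
    rw [Finset.sum_biUnion hdisj]
    calc (M:ℝ) = ∑ _m ∈ Finset.range M, (1:ℝ) := by simp
      _ ≤ ∑ m ∈ Finset.range M, ((m:ℝ)+1) :=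
          Finset.sum_le_sum fun m _ => by linarith [Nat.cast_nonneg (α := ℝ) m]
      _ ≤ ∑ m ∈ Finset.range M, ∑ nj ∈ D m, |Y nj.1 (T (X nj.2))| ^ p :=
          Finset.sum_le_sum fun m _ => by
            have := hDsum m
            push_cast at this ⊢
            linarith
  have hle2 : ∑ nj ∈ (Finset.range M).biUnion D, |Y nj.1 (T (X nj.2))| ^ p ≤
      ∑' nj : ℕ × ℕ, |Y nj.1 (T (X nj.2))| ^ p :=
    Summable.sum_le_tsum _ (fun nj _ => term_nonneg p _) hdouble
  linarith

end Main2

lemma midNorm_nonneg (p : ℝ) (x : ℕ → G) : 0 ≤ midNorm p x :=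
  Real.iSup_nonneg fun ys => Real.rpow_nonneg (tsum_nonneg fun nj => term_nonneg p _) _

lemma wsummable_zero {r : ℝ} (hrne : r ≠ 0) : WSummable r (fun _ : ℕ => (0:G)) := by
  intro f
  have : (fun j : ℕ => |f (0:G)| ^ r) = fun _ => 0 := by
    funext j; rw [map_zero, abs_zero, Real.zero_rpow hrne]
  rw [this]
  exact summable_zero

lemma wNorm_zero_le_one {r : ℝ} (hrne : r ≠ 0) : wNorm r (fun _ : ℕ => (0:G)) ≤ 1 := by
  apply Real.iSup_le _ zero_le_one
  rintro ⟨f, hf⟩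
  have : (fun j : ℕ => |f (0:G)| ^ r) = fun _ => 0 := by
    funext j; rw [map_zero, abs_zero, Real.zero_rpow hrne]
  rw [this, tsum_zero, Real.zero_rpow (one_div_ne_zero hrne)]
  exact zero_le_one


end Helpers

/-- `T` is weakly mid `(p;q)`-summing (maps `ℓ_q^w(E)` into `ℓ_p^{mid}(F)`)
iff there is `B > 0` with
`(Σ_n Σ_{j<k} |y_n*(T x_j)|^p)^{1/p} ≤ B ‖(x_j)_{j<k}‖_{w,q} ‖(y_n*)‖_{w,p}`
for all `k`, all `x_1, …, x_k` and all `(y_n*) ∈ ℓ_p^w(F*)`; moreover the norm of the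
induced map (the sup over the unit ball of `ℓ_q^w(E)`) is the least such `B`. -/
theorem stmt_13 {E F : Type*} [NormedAddCommGroup E] [NormedSpace ℝ E] [CompleteSpace E]
    [NormedAddCommGroup F] [NormedSpace ℝ F] [CompleteSpace F]
    (p q : ℝ) (hq : 1 ≤ q) (hqp : q ≤ p) (T : E →L[ℝ] F) :
    ((∀ x : ℕ → E, WSummable q x → MidSummable p fun j => T (x j)) ↔
      ∃ B : ℝ, 0 < B ∧ ∀ (k : ℕ) (x : ℕ → E) (y : ℕ → F →L[ℝ] ℝ), WSummable p y →
        (∑' n : ℕ, ∑ j ∈ Finset.range k, |y n (T (x j))| ^ p) ^ (1 / p) ≤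
          B * wNorm q (trunc k x) * wNorm p y) ∧
    ((∀ x : ℕ → E, WSummable q x → MidSummable p fun j => T (x j)) →
      (⨆ x : {x : ℕ → E // WSummable q x ∧ wNorm q x ≤ 1},
          midNorm p fun j => T (x.1 j)) =
        sInf {B : ℝ | 0 < B ∧ ∀ (k : ℕ) (x : ℕ → E) (y : ℕ → F →L[ℝ] ℝ), WSummable p y →
          (∑' n : ℕ, ∑ j ∈ Finset.range k, |y n (T (x j))| ^ p) ^ (1 / p) ≤
            B * wNorm q (trunc k x) * wNorm p y}) := by
  have hp1 : (1:ℝ) ≤ p := le_trans hq hqp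
  have hp0 : (0:ℝ) < p := lt_of_lt_of_le one_pos hp1
  have hpne : p ≠ 0 := ne_of_gt hp0
  have hq0 : (0:ℝ) < q := lt_of_lt_of_le one_pos hq
  have hqne : q ≠ 0 := ne_of_gt hq0
  constructor
  · constructor
    · intro H
      exact exists_B hq hqp T H
    · rintro ⟨B, hB0, hB⟩ x hx
      refine ⟨wsummable_mono hq0 hqp (fun g => hx (g.comp T)), ?_⟩
      intro ys hys
      exact double_summable hq hqp T hB0.le hB hx hys
  · intro H
    obtain ⟨B₀, hB₀0, hB₀⟩ := exists_B hq hqp T H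
    apply le_antisymm
    · refine le_csInf ⟨B₀, ⟨hB₀0, hB₀⟩⟩ ?_
      rintro B ⟨hBpos, hB⟩
      apply Real.iSup_le _ hBpos.le
      rintro ⟨x, hxw, hx1⟩
      exact midNorm_le_of_B hq hqp T hBpos.le hB hxw hx1
    · set S := ⨆ x : {x : ℕ → E // WSummable q x ∧ wNorm q x ≤ 1},
        midNorm p fun j => T (x.1 j) with hSdef
      have hS0 : 0 ≤ S := Real.iSup_nonneg fun x => midNorm_nonneg p _
      have hclaim : ∀ (k : ℕ) (x : ℕ → E) (y : ℕ → F →L[ℝ] ℝ), WSummable p y →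
          (∑' n : ℕ, ∑ j ∈ Finset.range k, |y n (T (x j))| ^ p) ^ (1 / p) ≤
            S * wNorm q (trunc k x) * wNorm p y := by
        intro k x y hy
        have hA0 : 0 ≤ ∑' n : ℕ, ∑ j ∈ Finset.range k, |y n (T (x j))| ^ p :=
          tsum_nonneg fun n => Finset.sum_nonneg fun j _ => term_nonneg p _
        by_cases haz : wNorm q (trunc k x) = 0
        · have hxz : ∀ j, j < k → x j = 0 := by
            intro j hj
            have h2 := apply_eq_zero_of_wNorm_eq_zero hq (wsummable_trunc hqne k x) haz j
            rwa [show trunc k x j = x j from by simp [trunc, hj]] at h2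
          have hAz : (∑' n : ℕ, ∑ j ∈ Finset.range k, |y n (T (x j))| ^ p) = 0 := by
            have h3 : ∀ n : ℕ, ∑ j ∈ Finset.range k, |y n (T (x j))| ^ p = 0 := fun n =>
              Finset.sum_eq_zero fun j hj => by
                rw [Finset.mem_range] at hj
                rw [hxz j hj, map_zero, map_zero, abs_zero, Real.zero_rpow hpne]
            simp only [h3]; exact tsum_zero
          rw [hAz, Real.zero_rpow (one_div_ne_zero hpne)]
          exact mul_nonneg (mul_nonneg hS0 (wNorm_nonneg _ _)) (wNorm_nonneg _ _)
        by_cases hbz : wNorm p y = 0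
        · have hyz : ∀ n, y n = 0 := fun n =>
            apply_eq_zero_of_wNorm_eq_zero hp1 hy hbz n
          have hAz : (∑' n : ℕ, ∑ j ∈ Finset.range k, |y n (T (x j))| ^ p) = 0 := by
            have h3 : ∀ n : ℕ, ∑ j ∈ Finset.range k, |y n (T (x j))| ^ p = 0 := fun n =>
              Finset.sum_eq_zero fun j _ => by
                rw [hyz n, ContinuousLinearMap.zero_apply, abs_zero, Real.zero_rpow hpne]
            simp only [h3]; exact tsum_zero
          rw [hAz, Real.zero_rpow (one_div_ne_zero hpne)]
          exact mul_nonneg (mul_nonneg hS0 (wNorm_nonneg _ _)) (wNorm_nonneg _ _)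
        have ha0 : 0 < wNorm q (trunc k x) := (wNorm_nonneg q (trunc k x)).lt_of_ne (Ne.symm haz)
        have hb0 : 0 < wNorm p y := (wNorm_nonneg p y).lt_of_ne (Ne.symm hbz)
        set a := wNorm q (trunc k x) with hadef
        set b := wNorm p y with hbdef
        set xh : ℕ → E := fun j => a⁻¹ • trunc k x j with hxh
        set yh : ℕ → F →L[ℝ] ℝ := fun n => b⁻¹ • y n with hyh
        have hxhw : WSummable q xh := wsummable_smul (wsummable_trunc hqne k x) a⁻¹
        have hyhw : WSummable p yh := wsummable_smul hy b⁻¹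
        have hxh1 : wNorm q xh ≤ 1 := by
          apply Real.iSup_le _ zero_le_one
          rintro ⟨f, hf⟩
          have h1 : ∀ j, |f (xh j)| ^ q = (a⁻¹) ^ q * |f (trunc k x j)| ^ q := by
            intro j
            rw [show xh j = a⁻¹ • trunc k x j from rfl, map_smul, smul_eq_mul, abs_mul,
              abs_of_nonneg (inv_nonneg.2 ha0.le),
              Real.mul_rpow (inv_nonneg.2 ha0.le) (abs_nonneg _)]
          have h2 : ∑' j, |f (xh j)| ^ q ≤ 1 := by
            calc ∑' j, |f (xh j)| ^ q = (a⁻¹)^q * ∑' j, |f (trunc k x j)| ^ q := by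
                  simp only [h1]; exact tsum_mul_left
              _ ≤ (a⁻¹)^q * (a ^ q * ‖f‖ ^ q) :=
                  mul_le_mul_of_nonneg_left (wNorm_bound hq (wsummable_trunc hqne k x) f)
                    (Real.rpow_nonneg (inv_nonneg.2 ha0.le) q)
              _ = (a⁻¹ * a)^q * ‖f‖^q := by
                  rw [← mul_assoc, ← Real.mul_rpow (inv_nonneg.2 ha0.le) ha0.le]
              _ = ‖f‖ ^ q := by rw [inv_mul_cancel₀ ha0.ne', Real.one_rpow, one_mul]
              _ ≤ 1 := Real.rpow_le_one (norm_nonneg f) hf hq0.le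
          calc (∑' j, |f (xh j)| ^ q) ^ (1/q) ≤ (1:ℝ) ^ (1/q) :=
                Real.rpow_le_rpow (tsum_nonneg fun j => term_nonneg q _) h2 (by positivity)
            _ = 1 := Real.one_rpow _
        have hyh1 : wNorm p yh ≤ 1 := by
          apply Real.iSup_le _ zero_le_one
          rintro ⟨f, hf⟩
          have h1 : ∀ n, |f (yh n)| ^ p = (b⁻¹) ^ p * |f (y n)| ^ p := by
            intro n
            rw [show yh n = b⁻¹ • y n from rfl, map_smul, smul_eq_mul, abs_mul,
              abs_of_nonneg (inv_nonneg.2 hb0.le),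
              Real.mul_rpow (inv_nonneg.2 hb0.le) (abs_nonneg _)]
          have h2 : ∑' n, |f (yh n)| ^ p ≤ 1 := by
            calc ∑' n, |f (yh n)| ^ p = (b⁻¹)^p * ∑' n, |f (y n)| ^ p := by
                  simp only [h1]; exact tsum_mul_left
              _ ≤ (b⁻¹)^p * (b ^ p * ‖f‖ ^ p) :=
                  mul_le_mul_of_nonneg_left (wNorm_bound hp1 hy f)
                    (Real.rpow_nonneg (inv_nonneg.2 hb0.le) p)
              _ = (b⁻¹ * b)^p * ‖f‖^p := by
                  rw [← mul_assoc, ← Real.mul_rpow (inv_nonneg.2 hb0.le) hb0.le]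
              _ = ‖f‖ ^ p := by rw [inv_mul_cancel₀ hb0.ne', Real.one_rpow, one_mul]
              _ ≤ 1 := Real.rpow_le_one (norm_nonneg f) hf hp0.le
          calc (∑' n, |f (yh n)| ^ p) ^ (1/p) ≤ (1:ℝ) ^ (1/p) :=
                Real.rpow_le_rpow (tsum_nonneg fun n => term_nonneg p _) h2 (by positivity)
            _ = 1 := Real.one_rpow _
        have hdouble := (H xh hxhw).2 yh hyhw
        have hrows : ∀ n, Summable fun j => |yh n (T (xh j))| ^ p := by
          intro n
          apply summable_of_ne_finset_zero (s := Finset.range k)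
          intro j hj
          rw [Finset.mem_range, not_lt] at hj
          have hz : xh j = 0 := by
            rw [show xh j = a⁻¹ • trunc k x j from rfl,
              show trunc k x j = 0 from by simp [trunc, not_lt.2 hj], smul_zero]
          rw [hz, map_zero, map_zero, abs_zero, Real.zero_rpow hpne]
        have hterm : ∀ n, ∀ j ∈ Finset.range k, |yh n (T (xh j))| ^ p =
            (b⁻¹ * a⁻¹) ^ p * |y n (T (x j))| ^ p := by
          intro n j hj
          rw [Finset.mem_range] at hj
          have hxv : xh j = a⁻¹ • x j := by
            rw [show xh j = a⁻¹ • trunc k x j from rfl,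
              show trunc k x j = x j from by simp [trunc, hj]]
          have hval : yh n (T (xh j)) = b⁻¹ * (a⁻¹ * y n (T (x j))) := by
            rw [show yh n = b⁻¹ • y n from rfl, hxv, map_smul,
              ContinuousLinearMap.smul_apply, map_smul, smul_eq_mul, smul_eq_mul]
          rw [hval, abs_mul, abs_mul, abs_of_nonneg (inv_nonneg.2 hb0.le),
            abs_of_nonneg (inv_nonneg.2 ha0.le), ← mul_assoc,
            Real.mul_rpow (mul_nonneg (inv_nonneg.2 hb0.le) (inv_nonneg.2 ha0.le))
              (abs_nonneg _)]
        have hprod : ∑' nj : ℕ × ℕ, |yh nj.1 (T (xh nj.2))| ^ p =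
            (b⁻¹ * a⁻¹) ^ p * ∑' n, ∑ j ∈ Finset.range k, |y n (T (x j))| ^ p := by
          rw [Summable.tsum_prod' hdouble hrows]
          calc ∑' n, ∑' j, |yh n (T (xh j))| ^ p
              = ∑' n, ∑ j ∈ Finset.range k, |yh n (T (xh j))| ^ p := by
                apply tsum_congr
                intro n
                apply tsum_eq_sum
                intro j hj
                rw [Finset.mem_range, not_lt] at hj
                have hz : xh j = 0 := by
                  rw [show xh j = a⁻¹ • trunc k x j from rfl,
                    show trunc k x j = 0 from by simp [trunc, not_lt.2 hj], smul_zero]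
                rw [hz, map_zero, map_zero, abs_zero, Real.zero_rpow hpne]
            _ = ∑' n, (b⁻¹ * a⁻¹) ^ p * ∑ j ∈ Finset.range k, |y n (T (x j))| ^ p := by
                apply tsum_congr
                intro n
                rw [Finset.mul_sum]
                exact Finset.sum_congr rfl (hterm n)
            _ = (b⁻¹ * a⁻¹) ^ p * ∑' n, ∑ j ∈ Finset.range k, |y n (T (x j))| ^ p :=
                tsum_mul_left
        have hbddmid : BddAbove (Set.range
            fun ys : {ys : ℕ → F →L[ℝ] ℝ // WSummable p ys ∧ wNorm p ys ≤ 1} =>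
            (∑' nj : ℕ × ℕ, |ys.1 nj.1 (T (xh nj.2))| ^ p) ^ (1/p)) := by
          refine ⟨B₀, ?_⟩
          rintro _ ⟨ys, rfl⟩
          exact element_le_of_B hq hqp T hB₀0.le hB₀ hxhw hxh1 ys.2.1 ys.2.2
        have h5 : (∑' nj : ℕ × ℕ, |yh nj.1 (T (xh nj.2))| ^ p) ^ (1/p) ≤
            midNorm p fun j => T (xh j) :=
          le_ciSup hbddmid (⟨yh, hyhw, hyh1⟩ :
            {ys : ℕ → F →L[ℝ] ℝ // WSummable p ys ∧ wNorm p ys ≤ 1})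
        have hbddS : BddAbove (Set.range
            fun x : {x : ℕ → E // WSummable q x ∧ wNorm q x ≤ 1} =>
            midNorm p fun j => T (x.1 j)) := by
          refine ⟨B₀, ?_⟩
          rintro _ ⟨xs, rfl⟩
          exact midNorm_le_of_B hq hqp T hB₀0.le hB₀ xs.2.1 xs.2.2
        have h6 : (midNorm p fun j => T (xh j)) ≤ S :=
          le_ciSup hbddS (⟨xh, hxhw, hxh1⟩ : {x : ℕ → E // WSummable q x ∧ wNorm q x ≤ 1})
        have h7 : (b⁻¹ * a⁻¹) *
            (∑' n, ∑ j ∈ Finset.range k, |y n (T (x j))| ^ p) ^ (1/p) ≤ S := by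
          have h8 := le_trans h5 h6
          rwa [hprod, Real.mul_rpow
            (Real.rpow_nonneg (mul_nonneg (inv_nonneg.2 hb0.le) (inv_nonneg.2 ha0.le)) p) hA0,
            show ((b⁻¹ * a⁻¹ : ℝ) ^ p) ^ (1/p) = b⁻¹ * a⁻¹ from by
              rw [one_div, Real.rpow_rpow_inv
                (mul_nonneg (inv_nonneg.2 hb0.le) (inv_nonneg.2 ha0.le)) hpne]] at h8
        have hab1 : (a * b) * (b⁻¹ * a⁻¹) = 1 := by
          rw [← mul_inv_rev]
          exact mul_inv_cancel₀ (mul_pos ha0 hb0).ne'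
        calc (∑' n, ∑ j ∈ Finset.range k, |y n (T (x j))| ^ p) ^ (1/p)
            = ((a * b) * (b⁻¹ * a⁻¹)) *
              (∑' n, ∑ j ∈ Finset.range k, |y n (T (x j))| ^ p) ^ (1/p) := by
              rw [hab1, one_mul]
          _ = (a * b) * ((b⁻¹ * a⁻¹) *
              (∑' n, ∑ j ∈ Finset.range k, |y n (T (x j))| ^ p) ^ (1/p)) := by ring
          _ ≤ (a * b) * S := mul_le_mul_of_nonneg_left h7 (mul_nonneg ha0.le hb0.le)
          _ = S * a * b := by ring
      apply le_of_forall_pos_le_add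
      intro ε hε
      have hmem : (S + ε) ∈ {B : ℝ | 0 < B ∧
          ∀ (k : ℕ) (x : ℕ → E) (y : ℕ → F →L[ℝ] ℝ), WSummable p y →
          (∑' n : ℕ, ∑ j ∈ Finset.range k, |y n (T (x j))| ^ p) ^ (1 / p) ≤
            B * wNorm q (trunc k x) * wNorm p y} := by
        constructor
        · linarith
        · intro k x y hy
          calc (∑' n : ℕ, ∑ j ∈ Finset.range k, |y n (T (x j))| ^ p) ^ (1 / p)
              ≤ S * wNorm q (trunc k x) * wNorm p y := hclaim k x y hy
            _ ≤ (S + ε) * wNorm q (trunc k x) * wNorm p y :=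
                mul_le_mul_of_nonneg_right (mul_le_mul_of_nonneg_right (by linarith)
                  (wNorm_nonneg _ _)) (wNorm_nonneg _ _)
      exact csInf_le ⟨0, fun B hB => hB.1.le⟩ hmem
end
end

section
/- A bounded linear operator T : E → F sends every weakly q-summable sequence to a mid p-summable sequence if and only if it sends every unconditionally q-summable sequence to a mid p-summable sequence. -/
open Filter

noncomputable section

section Aux

open Filter

private lemma aux_rpow_mono {a : ℕ → ℝ} {q p : ℝ} (hq : 0 < q) (hp : 0 < p) (hqp : q ≤ p)
    (ha : ∀ j, 0 ≤ a j) (hs : Summable fun j => a j ^ q) :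
    Summable fun j => a j ^ p := by
  have h0 : Tendsto (fun j => a j ^ q) atTop (nhds 0) := hs.tendsto_atTop_zero
  have hev : ∀ᶠ j in atTop, a j ^ q < 1 := h0.eventually_lt_const one_pos
  obtain ⟨N, hN⟩ := eventually_atTop.1 hev
  rw [← summable_nat_add_iff N]
  apply Summable.of_nonneg_of_le (fun j => Real.rpow_nonneg (ha _) _) ?_
    ((summable_nat_add_iff N).2 hs)
  intro j
  rcases eq_or_lt_of_le (ha (j + N)) with h | h
  · rw [← h, Real.zero_rpow hp.ne', Real.zero_rpow hq.ne']
  · have h1 : a (j + N) ≤ 1 := by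
      by_contra hgt
      push_neg at hgt
      have h2 : (1 : ℝ) ^ q < a (j + N) ^ q :=
        Real.rpow_lt_rpow (by norm_num) hgt hq
      rw [Real.one_rpow] at h2
      exact absurd (hN (j + N) (Nat.le_add_left N j)) (not_lt.2 h2.le)
    exact Real.rpow_le_rpow_of_exponent_ge h h1 hqp

/-- Given a nonnegative non-summable sequence `b`, there is a positive antitone null
sequence `ε`, bounded by 1, such that `b j * ε j ^ p` is still not summable. -/
private lemma aux_exists_eps {b : ℕ → ℝ} (hbn : ∀ j, 0 ≤ b j) (hnb : ¬ Summable b)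
    {p : ℝ} (hp0 : 0 < p) :
    ∃ ε : ℕ → ℝ, (∀ j, 0 < ε j) ∧ (∀ j, ε j ≤ 1) ∧ Antitone ε ∧
      Tendsto ε atTop (nhds 0) ∧ ¬ Summable (fun j => b j * ε j ^ p) := by
  have hS : Tendsto (fun n => ∑ j ∈ Finset.range n, b j) atTop atTop :=
    (not_summable_iff_tendsto_nat_atTop_of_nonneg hbn).1 hnb
  have key : ∀ n : ℕ, ∃ m, n < m ∧
      (∑ j ∈ Finset.range n, b j) + 1 ≤ ∑ j ∈ Finset.range m, b j := by
    intro n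
    obtain ⟨m, h1, h2⟩ :=
      ((hS.eventually_ge_atTop ((∑ j ∈ Finset.range n, b j) + 1)).and
        (eventually_gt_atTop n)).exists
    exact ⟨m, h2, h1⟩
  set N : ℕ → ℕ := fun k => Nat.rec 0 (fun _ ih => (key ih).choose) k with hNdef
  have hN0 : N 0 = 0 := rfl
  have hNlt : ∀ k, N k < N (k + 1) := fun k => (key (N k)).choose_spec.1
  have hNgain : ∀ k, (∑ j ∈ Finset.range (N k), b j) + 1 ≤
      ∑ j ∈ Finset.range (N (k + 1)), b j := fun k => (key (N k)).choose_spec.2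
  have hNmono : StrictMono N := strictMono_nat_of_lt_succ hNlt
  have hNge : ∀ k, k ≤ N k := fun k => by
    induction k with
    | zero => simp [hN0]
    | succ k ih => exact Nat.succ_le_of_lt (lt_of_le_of_lt ih (hNlt k))
  set kj : ℕ → ℕ := fun j => Nat.findGreatest (fun k => N k ≤ j) j with hkjdef
  have hkj1 : ∀ j, N (kj j) ≤ j := fun j =>
    Nat.findGreatest_spec (P := fun k => N k ≤ j) (Nat.zero_le j) (by simp [hN0])
  have hkjmono : Monotone kj := by
    intro j j' hjj
    exact Nat.le_findGreatest (P := fun k => N k ≤ j') (le_trans (Nat.findGreatest_le j) hjj)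
      (le_trans (hkj1 j) hjj)
  have hkjblock : ∀ k j, N k ≤ j → j < N (k + 1) → kj j = k := by
    intro k j h1 h2
    have hge : k ≤ kj j :=
      Nat.le_findGreatest (P := fun k' => N k' ≤ j) (le_trans (hNge k) h1) h1
    have hlt : kj j < k + 1 := by
      by_contra h
      push_neg at h
      exact absurd (le_trans (hNmono.monotone h) (hkj1 j)) (not_le.2 h2)
    omega
  have hkjtop : Tendsto kj atTop atTop := by
    apply tendsto_atTop_atTop.2
    intro K
    exact ⟨N K, fun j hj =>
      Nat.le_findGreatest (P := fun k => N k ≤ j) (le_trans (hNge K) hj) hj⟩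
  refine ⟨fun j => (((kj j : ℝ) + 1)⁻¹) ^ (1 / p), ?_, ?_, ?_, ?_, ?_⟩
  · intro j
    exact Real.rpow_pos_of_pos (by positivity) _
  · intro j
    apply Real.rpow_le_one (by positivity) ?_ (one_div_pos.2 hp0).le
    rw [inv_le_one_iff₀]
    right
    exact le_add_of_nonneg_left (Nat.cast_nonneg _)
  · intro j j' h
    apply Real.rpow_le_rpow (by positivity) ?_ (one_div_pos.2 hp0).le
    apply inv_anti₀ (by positivity)
    have h2 : (kj j : ℝ) ≤ (kj j' : ℝ) := by exact_mod_cast hkjmono h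
    linarith
  · have h2 : Tendsto (fun k : ℕ => ((k : ℝ) + 1)⁻¹) atTop (nhds 0) := by
      simpa [one_div] using tendsto_one_div_add_atTop_nhds_zero_nat (𝕜 := ℝ)
    have h3 := (Real.continuousAt_rpow_const 0 (1 / p)
      (Or.inr (one_div_pos.2 hp0).le)).tendsto
    have h4 := h3.comp h2
    have h5 : Tendsto (fun k : ℕ => (((k : ℝ) + 1)⁻¹) ^ (1 / p)) atTop (nhds 0) := by
      simpa [Function.comp_def, one_div, Real.zero_rpow (inv_pos.2 hp0).ne'] using h4
    exact h5.comp hkjtop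
  · -- not summable: partial sums dominate harmonic sums
    intro hsum
    have hεpow : ∀ j, ((((kj j : ℝ) + 1)⁻¹) ^ (1 / p)) ^ p = ((kj j : ℝ) + 1)⁻¹ := by
      intro j
      rw [← Real.rpow_mul (by positivity), one_div_mul_cancel hp0.ne', Real.rpow_one]
    have hsum4 : Summable fun j => b j * ((kj j : ℝ) + 1)⁻¹ := by
      simpa only [hεpow] using hsum
    set c : ℕ → ℝ := fun j => b j * ((kj j : ℝ) + 1)⁻¹ with hcdef
    have hcn : ∀ j, 0 ≤ c j := fun j => mul_nonneg (hbn j) (by positivity)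
    have hlow : ∀ K, (∑ k ∈ Finset.range K, ((k : ℝ) + 1)⁻¹) ≤
        ∑ j ∈ Finset.range (N K), c j := by
      intro K
      induction K with
      | zero => simp [hN0]
      | succ K ih =>
        have hsplit : ∑ j ∈ Finset.range (N (K + 1)), c j =
            (∑ j ∈ Finset.range (N K), c j) +
            ∑ j ∈ Finset.Ico (N K) (N (K + 1)), c j := by
          have h := Finset.sum_Ico_consecutive c (Nat.zero_le (N K)) (hNlt K).le
          simp only [← Finset.range_eq_Ico] at h
          exact h.symm
        have hblock : ((K : ℝ) + 1)⁻¹ ≤ ∑ j ∈ Finset.Ico (N K) (N (K + 1)), c j := by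
          have h1 : ∀ j ∈ Finset.Ico (N K) (N (K + 1)),
              c j = b j * ((K : ℝ) + 1)⁻¹ := by
            intro j hj
            rw [Finset.mem_Ico] at hj
            show b j * ((kj j : ℝ) + 1)⁻¹ = b j * ((K : ℝ) + 1)⁻¹
            rw [hkjblock K j hj.1 hj.2]
          rw [Finset.sum_congr rfl h1, ← Finset.sum_mul]
          have h2 : (1 : ℝ) ≤ ∑ j ∈ Finset.Ico (N K) (N (K + 1)), b j := by
            rw [Finset.sum_Ico_eq_sub _ (hNlt K).le]
            have := hNgain K
            linarith
          calc ((K : ℝ) + 1)⁻¹ = 1 * ((K : ℝ) + 1)⁻¹ := (one_mul _).symm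
            _ ≤ (∑ j ∈ Finset.Ico (N K) (N (K + 1)), b j) * ((K : ℝ) + 1)⁻¹ :=
              mul_le_mul_of_nonneg_right h2 (by positivity)
        rw [Finset.sum_range_succ, hsplit]
        exact add_le_add ih hblock
    have hbd : ∀ K, (∑ k ∈ Finset.range K, ((k : ℝ) + 1)⁻¹) ≤ ∑' j, c j := fun K =>
      (hlow K).trans (Summable.sum_le_tsum _ (fun j _ => hcn j) hsum4)
    have hharm : Tendsto (fun K => ∑ k ∈ Finset.range K, ((k : ℝ) + 1)⁻¹)
        atTop atTop := by
      simpa [one_div] using Real.tendsto_sum_range_one_div_nat_succ_atTop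
    obtain ⟨K, hK⟩ := (hharm.eventually_gt_atTop (∑' j, c j)).exists
    exact absurd (hbd K) (not_le.2 hK)

end Aux

set_option maxHeartbeats 2000000 in
/-- `T` sends every weakly `q`-summable sequence to a mid `p`-summable
sequence iff it sends every unconditionally `q`-summable sequence to a mid `p`-summable
sequence. -/
theorem stmt_14 {E F : Type*} [NormedAddCommGroup E] [NormedSpace ℝ E] [CompleteSpace E]
    [NormedAddCommGroup F] [NormedSpace ℝ F] [CompleteSpace F]
    (p q : ℝ) (hq : 1 ≤ q) (hqp : q ≤ p) (T : E →L[ℝ] F) :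
    (∀ x : ℕ → E, WSummable q x → MidSummable p fun j => T (x j)) ↔
    (∀ x : ℕ → E, USummable q x → MidSummable p fun j => T (x j)) := by
  constructor
  · intro h x hx
    exact h x hx.1
  intro H x hx
  have hq0 : 0 < q := lt_of_lt_of_le one_pos hq
  have hp0 : 0 < p := lt_of_lt_of_le hq0 hqp
  haveI hne : Nonempty {f : E →L[ℝ] ℝ // ‖f‖ ≤ 1} := ⟨⟨0, by simp⟩⟩
  by_cases hA : BddAbove (Set.range fun f : {f : E →L[ℝ] ℝ // ‖f‖ ≤ 1} =>
      (∑' j, |f.1 (x j)| ^ q) ^ (1 / q))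
  case neg =>
    -- the weak norm sup-set of `x` is unbounded; then all tail sup-sets are unbounded too,
    -- so all tail weak norms are (junk) 0 and `x` is unconditionally summable.
    apply H x
    refine ⟨hx, ?_⟩
    have hz : ∀ k, wNorm q (fun j => x (j + k)) = 0 := by
      intro k
      unfold wNorm
      apply Real.iSup_of_not_bddAbove
      intro hbdd
      apply hA
      obtain ⟨M, hM⟩ := hbdd
      refine ⟨((∑ j ∈ Finset.range k, ‖x j‖ ^ q) + (max M 0) ^ q) ^ (1 / q), ?_⟩
      rintro r ⟨f, rfl⟩
      have hsf := hx f.1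
      have htn : 0 ≤ ∑' j, |f.1 (x (j + k))| ^ q :=
        tsum_nonneg fun j => Real.rpow_nonneg (abs_nonneg _) _
      have htail : (∑' j, |f.1 (x (j + k))| ^ q) ^ (1 / q) ≤ max M 0 :=
        le_max_of_le_left (hM ⟨f, rfl⟩)
      have htail' : (∑' j, |f.1 (x (j + k))| ^ q) ≤ (max M 0) ^ q := by
        have h1 : ((∑' j, |f.1 (x (j + k))| ^ q) ^ (1 / q)) ^ q ≤ (max M 0) ^ q :=
          Real.rpow_le_rpow (Real.rpow_nonneg htn _) htail hq0.le
        rwa [← Real.rpow_mul htn, one_div_mul_cancel hq0.ne', Real.rpow_one] at h1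
      have hhead : (∑ j ∈ Finset.range k, |f.1 (x j)| ^ q) ≤
          ∑ j ∈ Finset.range k, ‖x j‖ ^ q := by
        apply Finset.sum_le_sum
        intro j _
        apply Real.rpow_le_rpow (abs_nonneg _) ?_ hq0.le
        calc |f.1 (x j)| ≤ ‖f.1‖ * ‖x j‖ := f.1.le_opNorm _
          _ ≤ 1 * ‖x j‖ := mul_le_mul_of_nonneg_right f.2 (norm_nonneg _)
          _ = ‖x j‖ := one_mul _
      have hfull : (∑' j, |f.1 (x j)| ^ q) ≤
          (∑ j ∈ Finset.range k, ‖x j‖ ^ q) + (max M 0) ^ q := by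
        rw [← Summable.sum_add_tsum_nat_add k hsf]
        exact add_le_add hhead htail'
      exact Real.rpow_le_rpow (tsum_nonneg fun j => Real.rpow_nonneg (abs_nonneg _) _)
        hfull (one_div_pos.2 hq0).le
    have hzz : (fun k => wNorm q fun j => x (j + k)) = fun _ => (0 : ℝ) := funext hz
    rw [hzz]
    exact tendsto_const_nhds
  case pos =>
    set M : ℝ := ⨆ f : {f : E →L[ℝ] ℝ // ‖f‖ ≤ 1}, (∑' j, |f.1 (x j)| ^ q) ^ (1 / q)
      with hMdef
    have hle : ∀ f : {f : E →L[ℝ] ℝ // ‖f‖ ≤ 1},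
        (∑' j, |f.1 (x j)| ^ q) ^ (1 / q) ≤ M := fun f => le_ciSup hA f
    constructor
    · -- WSummable p (T ∘ x)
      intro f
      have hfc := hx (f.comp T)
      exact aux_rpow_mono hq0 hp0 hqp (fun j => abs_nonneg _) hfc
    · intro xs hxs
      by_contra hns
      have hslice : ∀ j, Summable fun n => |xs n (T (x j))| ^ p := by
        intro j
        have h1 := hxs (NormedSpace.inclusionInDoubleDual ℝ F (T (x j)))
        simpa [NormedSpace.dual_def] using h1
      set b : ℕ → ℝ := fun j => ∑' n, |xs n (T (x j))| ^ p with hbdef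
      have hbn : ∀ j, 0 ≤ b j :=
        fun j => tsum_nonneg fun n => Real.rpow_nonneg (abs_nonneg _) _
      have hnb : ¬ Summable b := by
        intro hsb
        apply hns
        have h1 : Summable fun jn : ℕ × ℕ => |xs jn.2 (T (x jn.1))| ^ p := by
          rw [summable_prod_of_nonneg (fun jn => Real.rpow_nonneg (abs_nonneg _) _)]
          exact ⟨fun j => hslice j, hsb⟩
        exact ((Equiv.prodComm ℕ ℕ).summable_iff).1 h1
      obtain ⟨ε, hεpos, hεle1, hεanti, hεtend, hεns⟩ := aux_exists_eps hbn hnb hp0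
      set y : ℕ → E := fun j => ε j • x j with hydef
      have habs : ∀ (f : E →L[ℝ] ℝ) j, |f (y j)| = ε j * |f (x j)| := by
        intro f j
        show |f (ε j • x j)| = ε j * |f (x j)|
        rw [map_smul, smul_eq_mul, abs_mul, abs_of_nonneg (hεpos j).le]
      have hyW : WSummable q y := by
        intro f
        apply Summable.of_nonneg_of_le (fun j => Real.rpow_nonneg (abs_nonneg _) _)
          ?_ (hx f)
        intro j
        rw [habs f j]
        apply Real.rpow_le_rpow (mul_nonneg (hεpos j).le (abs_nonneg _)) ?_ hq0.le
        exact mul_le_of_le_one_left (abs_nonneg _) (hεle1 j)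
      have hyU : USummable q y := by
        refine ⟨hyW, ?_⟩
        apply squeeze_zero (g := fun k => ε k * M)
        · intro k
          exact Real.iSup_nonneg fun f => Real.rpow_nonneg
            (tsum_nonneg fun j => Real.rpow_nonneg (abs_nonneg _) _) _
        · intro k
          unfold wNorm
          apply ciSup_le
          intro f
          have hsf := hx f.1
          have hsum1 : Summable fun j => |f.1 (x (j + k))| ^ q :=
            (summable_nat_add_iff k).2 hsf
          have hsum2 : Summable fun j => |f.1 (y (j + k))| ^ q :=
            (summable_nat_add_iff k).2 (hyW f.1)
          have step1 : (∑' j, |f.1 (y (j + k))| ^ q) ≤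
              ε k ^ q * ∑' j, |f.1 (x j)| ^ q := by
            calc (∑' j, |f.1 (y (j + k))| ^ q)
                ≤ ∑' j, ε k ^ q * |f.1 (x (j + k))| ^ q := by
                  apply Summable.tsum_le_tsum ?_ hsum2 (hsum1.mul_left _)
                  intro j
                  rw [habs f.1 (j + k), ← Real.mul_rpow (hεpos k).le (abs_nonneg _)]
                  apply Real.rpow_le_rpow (mul_nonneg (hεpos _).le (abs_nonneg _))
                    ?_ hq0.le
                  exact mul_le_mul_of_nonneg_right (hεanti (Nat.le_add_left k j))
                    (abs_nonneg _)
              _ = ε k ^ q * ∑' j, |f.1 (x (j + k))| ^ q := tsum_mul_left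
              _ ≤ ε k ^ q * ∑' j, |f.1 (x j)| ^ q := by
                  apply mul_le_mul_of_nonneg_left ?_ (Real.rpow_nonneg (hεpos k).le _)
                  exact Summable.tsum_le_tsum_of_inj (fun j => j + k) (add_left_injective k)
                    (fun c _ => Real.rpow_nonneg (abs_nonneg _) _)
                    (fun j => le_refl _) hsum1 hsf
          have htn1 : 0 ≤ ∑' j, |f.1 (y (j + k))| ^ q :=
            tsum_nonneg fun j => Real.rpow_nonneg (abs_nonneg _) _
          have htn2 : 0 ≤ ∑' j, |f.1 (x j)| ^ q :=
            tsum_nonneg fun j => Real.rpow_nonneg (abs_nonneg _) _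
          have h1 : (∑' j, |f.1 (y (j + k))| ^ q) ^ (1 / q) ≤
              (ε k ^ q * ∑' j, |f.1 (x j)| ^ q) ^ (1 / q) :=
            Real.rpow_le_rpow htn1 step1 (one_div_pos.2 hq0).le
          have h2 : (ε k ^ q * ∑' j, |f.1 (x j)| ^ q) ^ (1 / q) =
              ε k * (∑' j, |f.1 (x j)| ^ q) ^ (1 / q) := by
            rw [Real.mul_rpow (Real.rpow_nonneg (hεpos k).le _) htn2,
              ← Real.rpow_mul (hεpos k).le, mul_one_div_cancel hq0.ne', Real.rpow_one]
          calc (∑' j, |f.1 (y (j + k))| ^ q) ^ (1 / q)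
              ≤ ε k * (∑' j, |f.1 (x j)| ^ q) ^ (1 / q) := h2 ▸ h1
            _ ≤ ε k * M := mul_le_mul_of_nonneg_left (hle f) (hεpos k).le
        · have hmc := hεtend.mul_const M
          rwa [zero_mul] at hmc
      have hmid := H y hyU
      have hsum := hmid.2 xs hxs
      have hrw : ∀ nj : ℕ × ℕ, |xs nj.1 (T (y nj.2))| ^ p =
          ε nj.2 ^ p * |xs nj.1 (T (x nj.2))| ^ p := by
        intro nj
        have h1 : T (y nj.2) = ε nj.2 • T (x nj.2) := by
          show T (ε nj.2 • x nj.2) = _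
          rw [map_smul]
        rw [h1, map_smul, smul_eq_mul, abs_mul, abs_of_nonneg (hεpos _).le,
          Real.mul_rpow (hεpos _).le (abs_nonneg _)]
      have hsum' : Summable fun nj : ℕ × ℕ => ε nj.2 ^ p * |xs nj.1 (T (x nj.2))| ^ p :=
        hsum.congr hrw
      have hsum2 : Summable fun jn : ℕ × ℕ => ε jn.1 ^ p * |xs jn.2 (T (x jn.1))| ^ p :=
        ((Equiv.prodComm ℕ ℕ).summable_iff).2 hsum'
      have hsum3 : Summable fun j => ∑' n, ε j ^ p * |xs n (T (x j))| ^ p :=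
        ((summable_prod_of_nonneg (fun jn => mul_nonneg (Real.rpow_nonneg (hεpos _).le _)
          (Real.rpow_nonneg (abs_nonneg _) _))).1 hsum2).2
      have heq : ∀ j, (∑' n, ε j ^ p * |xs n (T (x j))| ^ p) = b j * ε j ^ p := by
        intro j
        rw [tsum_mul_left, mul_comm]
      have hsum4 : Summable fun j => b j * ε j ^ p := hsum3.congr heq
      exact hεns hsum4
end
end

section
/- If 1 ≤ p < q < ∞, then the only bounded linear operator T : E → F that maps every sequence in ℓ_q^mid(E) to a sequence in ℓ_p(F) is the zero operator; likewise the only operator mapping ℓ_q^w(E) into ℓ_p^mid(F) is the zero operator. -/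
open Filter

noncomputable section

/-- if `1 ≤ p < q`, then the only operator mapping `ℓ_q^{mid}(E)` into
`ℓ_p(F)` is the zero operator, and likewise the only operator mapping `ℓ_q^w(E)` into
`ℓ_p^{mid}(F)` is the zero operator. -/
theorem stmt_15 {E F : Type*} [NormedAddCommGroup E] [NormedSpace ℝ E] [CompleteSpace E]
    [NormedAddCommGroup F] [NormedSpace ℝ F] [CompleteSpace F]
    (p q : ℝ) (hp : 1 ≤ p) (hpq : p < q) (T : E →L[ℝ] F) :
    ((∀ x : ℕ → E, MidSummable q x → MemLpSeq p fun j => T (x j)) → T = 0) ∧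
    ((∀ x : ℕ → E, WSummable q x → MidSummable p fun j => T (x j)) → T = 0) := by
  have hp0 : (0:ℝ) < p := lt_of_lt_of_le one_pos hp
  have hq0 : (0:ℝ) < q := lt_trans hp0 hpq
  set c : ℕ → ℝ := fun j => ((j:ℝ)+1) ^ (-(1/p)) with hc
  have hjpos : ∀ j : ℕ, (0:ℝ) < (j:ℝ)+1 := fun j => by positivity
  have hc_pos : ∀ j, 0 < c j := fun j => Real.rpow_pos_of_pos (hjpos j) _
  -- c j ^ p = ((j+1))⁻¹
  have hcp : ∀ j, c j ^ p = (((j:ℝ)+1))⁻¹ := by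
    intro j
    rw [hc, ← Real.rpow_mul (hjpos j).le, neg_mul, one_div, inv_mul_cancel₀ hp0.ne',
      Real.rpow_neg_one]
  -- c j ^ q = (j+1) ^ (-(q/p))
  have hcq : ∀ j, c j ^ q = ((j:ℝ)+1) ^ (-(q/p)) := by
    intro j
    rw [hc, ← Real.rpow_mul (hjpos j).le]
    ring_nf
  -- Σ c j ^ q summable
  have hsumq : Summable fun j => c j ^ q := by
    simp only [hcq]
    have h1 : Summable fun n : ℕ => (n:ℝ) ^ (-(q/p)) := by
      refine Real.summable_nat_rpow.mpr ?_
      have : 1 < q / p := (one_lt_div hp0).mpr hpq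
      linarith
    have := (summable_nat_add_iff 1).mpr h1
    refine this.congr fun n => ?_
    push_cast
    ring_nf
  -- ¬ Σ c j ^ p summable
  have hnsump : ¬ Summable fun j => c j ^ p := by
    simp only [hcp]
    intro h
    apply Real.not_summable_natCast_inv
    refine (summable_nat_add_iff 1).mp (h.congr fun n => ?_)
    push_cast
    ring_nf
  -- key: from summability of c^p * a with a > 0 derive contradiction
  have hkey : ∀ a : ℝ, 0 < a → ¬ Summable (fun j => c j ^ p * a) := by
    intro a ha h
    apply hnsump
    have := h.mul_right a⁻¹
    refine this.congr fun j => ?_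
    field_simp
  -- the test sequence c j • x is weakly q-summable
  have hws : ∀ x : E, WSummable q fun j => c j • x := by
    intro x f
    have : (fun j => |f (c j • x)| ^ q) = fun j => c j ^ q * |f x| ^ q := by
      funext j
      rw [map_smul, smul_eq_mul, abs_mul, abs_of_pos (hc_pos j),
        Real.mul_rpow (hc_pos j).le (abs_nonneg _)]
    rw [this]
    exact hsumq.mul_right _
  -- the test sequence is mid q-summable
  have hmid : ∀ x : E, MidSummable q fun j => c j • x := by
    intro x
    refine ⟨hws x, fun xs hxs => ?_⟩
    have h1 : Summable fun n => |xs n x| ^ q := by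
      have := hxs (ContinuousLinearMap.apply ℝ ℝ x)
      simpa using this
    have h2 := h1.mul_of_nonneg hsumq (fun n => by positivity) (fun j => by positivity)
    refine h2.congr fun nj => ?_
    rw [map_smul, smul_eq_mul, abs_mul, abs_of_pos (hc_pos nj.2),
      Real.mul_rpow (hc_pos nj.2).le (abs_nonneg _)]
    ring
  constructor
  · intro H
    ext x
    by_contra hTx
    have h := H (fun j => c j • x) (hmid x)
    unfold MemLpSeq at h
    have hTx' : (0:ℝ) < ‖T x‖ ^ p := by
      have : T x ≠ 0 := by simpa using hTx
      have h0 : 0 < ‖T x‖ := norm_pos_iff.mpr this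
      positivity
    apply hkey _ hTx'
    refine h.congr fun j => ?_
    show ‖T (c j • x)‖ ^ p = c j ^ p * ‖T x‖ ^ p
    rw [map_smul, norm_smul, Real.norm_eq_abs, abs_of_pos (hc_pos j),
      Real.mul_rpow (hc_pos j).le (norm_nonneg _)]
  · intro H
    ext x
    by_contra hTx
    have hTx0 : T x ≠ 0 := by simpa using hTx
    obtain ⟨g, hg1, hg2⟩ := exists_dual_vector ℝ (T x) (norm_ne_zero_iff.mpr hTx0)
    have h := (H (fun j => c j • x) (hws x)).1 g
    have hgval : |g (T x)| = ‖T x‖ := by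
      rw [hg2]
      simp [abs_of_nonneg (norm_nonneg (T x))]
    have hpos : (0:ℝ) < |g (T x)| ^ p := by
      rw [hgval]
      have h0 : 0 < ‖T x‖ := norm_pos_iff.mpr hTx0
      positivity
    apply hkey _ hpos
    refine h.congr fun j => ?_
    show |g (T (c j • x))| ^ p = c j ^ p * |g (T x)| ^ p
    rw [map_smul, map_smul, smul_eq_mul, abs_mul, abs_of_pos (hc_pos j),
      Real.mul_rpow (hc_pos j).le (abs_nonneg _)]
end
end

section
/- For a Banach space E and 1 ≤ p < ∞, the following are equivalent: (a) ℓ_p^mid(E) = ℓ_p^w(E); (b) every bounded linear operator from E to any Banach space F is absolutely p-summing whenever it maps ℓ_p^mid(E) into ℓ_p(F) (i.e., Π_p^mid(E;F) = Π_p(E;F) for all F); (c) Π_p^mid(E;ℓ_p) = Π_p(E;ℓ_p) = L(E;ℓ_p); (d) every bounded operator from any Banach space F into E maps ℓ_p^w(F) into ℓ_p^mid(E); (e) the identity of E maps ℓ_p^w(E) into ℓ_p^mid(E). -/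
open Filter

noncomputable section

namespace Stmt16Aux


/-- The "dual unit ball" condition on coefficients `a` over a finite set `S`. -/
def DualCond (p : ℝ) (S : Finset ℕ) (a : ℕ → ℝ) : Prop :=
  ∀ c : ℕ → ℝ, (∑ k ∈ S, |c k| ^ p) ≤ 1 → (∑ k ∈ S, |a k * c k|) ≤ 1

theorem sum_rpow_le_of_pairings {p : ℝ} (hp : 1 ≤ p) {b : ℕ → ℝ} {M : ℝ} (hM : 0 ≤ M)
    (h : ∀ (S : Finset ℕ) (a : ℕ → ℝ), DualCond p S a → |∑ k ∈ S, a k * b k| ≤ M)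
    (S : Finset ℕ) : ∑ k ∈ S, |b k| ^ p ≤ M ^ p := by
  have hp0 : (0:ℝ) < p := lt_of_lt_of_le one_pos hp
  rcases eq_or_lt_of_le hp with h1 | h1
  · -- p = 1
    subst h1
    simp only [Real.rpow_one]
    set a : ℕ → ℝ := fun k => if b k < 0 then -1 else 1 with ha
    have hcond : DualCond 1 S a := by
      intro c hc
      simp only [Real.rpow_one] at hc
      calc ∑ k ∈ S, |a k * c k| = ∑ k ∈ S, |c k| := by
            refine Finset.sum_congr rfl fun k _ => ?_
            rw [abs_mul]
            have : |a k| = 1 := by by_cases hb : b k < 0 <;> simp [ha, hb]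
            rw [this, one_mul]
        _ ≤ 1 := hc
    have key : ∑ k ∈ S, a k * b k = ∑ k ∈ S, |b k| := by
      refine Finset.sum_congr rfl fun k _ => ?_
      by_cases hb : b k < 0
      · simp [ha, hb, abs_of_neg hb]
      · simp [ha, hb, abs_of_nonneg (not_lt.mp hb)]
    calc ∑ k ∈ S, |b k| = ∑ k ∈ S, a k * b k := key.symm
      _ ≤ |∑ k ∈ S, a k * b k| := le_abs_self _
      _ ≤ M := h S a hcond
  · -- 1 < p
    set t := ∑ k ∈ S, |b k| ^ p with ht
    have ht0 : 0 ≤ t := Finset.sum_nonneg fun k _ => Real.rpow_nonneg (abs_nonneg _) _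
    rcases eq_or_lt_of_le ht0 with h0 | h0
    · rw [← h0]; exact Real.rpow_nonneg hM p
    · set q := p / (p - 1) with hqdef
      have hp1 : (0:ℝ) < p - 1 := by linarith
      have hq1 : 1 < q := by
        rw [hqdef, lt_div_iff₀ hp1]; linarith
      have hqp : Real.HolderConjugate q p := by
        rw [Real.holderConjugate_iff]
        constructor
        · exact hq1
        · rw [hqdef]; field_simp; ring
      set r := (p - 1) / p with hrdef
      have hrq : r * q = 1 := by rw [hrdef, hqdef]; field_simp
      have hpq : (p - 1) * q = p := by rw [hqdef]; field_simp
      set a : ℕ → ℝ := fun k => (if b k < 0 then -1 else 1) * |b k| ^ (p - 1) / t ^ r with ha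
      have htr0 : 0 < t ^ r := Real.rpow_pos_of_pos h0 r
      have habs : ∀ k, |a k| = |b k| ^ (p - 1) / t ^ r := by
        intro k
        rw [ha]
        simp only [abs_div, abs_mul]
        rw [abs_of_pos htr0, abs_of_nonneg (Real.rpow_nonneg (abs_nonneg _) _)]
        by_cases hb : b k < 0 <;> simp [hb]
      have haq : ∀ k, |a k| ^ q = |b k| ^ p / t := by
        intro k
        rw [habs k, Real.div_rpow (Real.rpow_nonneg (abs_nonneg _) _) htr0.le,
          ← Real.rpow_mul (abs_nonneg _), hpq, ← Real.rpow_mul ht0 , hrq, Real.rpow_one]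
      have hsum_aq : ∑ k ∈ S, |a k| ^ q = 1 := by
        rw [Finset.sum_congr rfl fun k _ => haq k, ← Finset.sum_div, ← ht, div_self h0.ne']
      have hcond : DualCond p S a := by
        intro c hc
        have young : ∀ k ∈ S, |a k * c k| ≤ |a k| ^ q / q + |c k| ^ p / p := by
          intro k _
          rw [abs_mul]
          have := Real.young_inequality (|a k|) (|c k|) hqp
          simpa [abs_abs] using this
        calc ∑ k ∈ S, |a k * c k| ≤ ∑ k ∈ S, (|a k| ^ q / q + |c k| ^ p / p) :=
              Finset.sum_le_sum young
          _ = (∑ k ∈ S, |a k| ^ q) / q + (∑ k ∈ S, |c k| ^ p) / p := by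
              rw [Finset.sum_add_distrib, Finset.sum_div, Finset.sum_div]
          _ ≤ 1 / q + 1 / p := by
              rw [hsum_aq]
              gcongr
          _ = 1 := by rw [one_div, one_div]; exact hqp.inv_add_inv_eq_one
      have hbp : ∀ x : ℝ, 0 ≤ x → x ^ (p - 1) * x = x ^ p := by
        intro x hx
        nth_rewrite 2 [← Real.rpow_one x]
        rw [← Real.rpow_add' hx (by intro hcon; rw [sub_add_cancel] at hcon; exact hp0.ne' hcon)]
        rw [sub_add_cancel]
      have hbb : ∀ k ∈ S, a k * b k = |b k| ^ p / t ^ r := by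
        intro k _
        rw [ha]
        by_cases hb : b k < 0
        · simp only [if_pos hb]
          rw [show (-1:ℝ) * |b k| ^ (p-1) / t ^ r * b k
              = |b k| ^ (p - 1) * (-b k) / t ^ r by ring, ← abs_of_neg hb,
              hbp _ (abs_nonneg _)]
        · simp only [if_neg hb]
          have hb' : 0 ≤ b k := not_lt.mp hb
          rw [abs_of_nonneg hb']
          rw [show (1:ℝ) * b k ^ (p-1) / t ^ r * b k
              = b k ^ (p - 1) * b k / t ^ r by ring, hbp _ hb']
      have hsum : ∑ k ∈ S, a k * b k = t ^ (1 - r) := by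
        rw [Finset.sum_congr rfl hbb, ← Finset.sum_div, ← ht,
          Real.rpow_sub h0, Real.rpow_one]
      have hfin := h S a hcond
      rw [hsum, abs_of_nonneg (Real.rpow_nonneg ht0 _)] at hfin
      have h1r : (1 - r) * p = 1 := by rw [hrdef]; field_simp; ring
      calc t = (t ^ (1 - r)) ^ p := by
            rw [← Real.rpow_mul ht0 , h1r, Real.rpow_one]
        _ ≤ M ^ p := Real.rpow_le_rpow (Real.rpow_nonneg ht0 _) hfin hp0.le



theorem wsummable_of_dual {G : Type*} [NormedAddCommGroup G] [NormedSpace ℝ G]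
    {p : ℝ} (hp : 1 ≤ p) {w : ℕ → G} {M : ℝ} (hM : 0 ≤ M)
    (hw : ∀ (S : Finset ℕ) (a : ℕ → ℝ), DualCond p S a → ‖∑ k ∈ S, a k • w k‖ ≤ M) :
    WSummable p w := by
  intro f
  refine summable_of_sum_le (c := (‖f‖ * M) ^ p) (fun k => Real.rpow_nonneg (abs_nonneg _) _) fun S => ?_
  refine sum_rpow_le_of_pairings hp (mul_nonneg (norm_nonneg f) hM) ?_ S
  intro S' a ha
  have hrw : ∑ k ∈ S', a k * f (w k) = f (∑ k ∈ S', a k • w k) := by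
    rw [map_sum]
    exact Finset.sum_congr rfl fun k _ => by rw [map_smul]; rfl
  rw [hrw, ← Real.norm_eq_abs]
  calc ‖f (∑ k ∈ S', a k • w k)‖ ≤ ‖f‖ * ‖∑ k ∈ S', a k • w k‖ := f.le_opNorm _
    _ ≤ ‖f‖ * M := mul_le_mul_of_nonneg_left (hw S' a ha) (norm_nonneg f)

variable (P : ENNReal) [Fact (1 ≤ P)]

/-- The `k`-th coordinate functional on `ℓ_p`. -/
def coordF (k : ℕ) : lp (fun _ : ℕ => ℝ) P →L[ℝ] ℝ :=
  LinearMap.mkContinuous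
    { toFun := fun z => z k
      map_add' := fun z w => by simp [lp.coeFn_add]
      map_smul' := fun c z => by simp [lp.coeFn_smul] }
    1 fun z => by
      rw [one_mul]
      exact lp.norm_apply_le_norm (zero_lt_one.trans_le Fact.out).ne' z k

@[simp] theorem coordF_apply (k : ℕ) (z : lp (fun _ : ℕ => ℝ) P) : coordF P k z = z k := rfl

variable {P}

theorem norm_sum_coordF {p : ℝ} (hp : 1 ≤ p) [Fact (1 ≤ ENNReal.ofReal p)] (S : Finset ℕ)
    (a : ℕ → ℝ) (ha : DualCond p S a) :
    ‖∑ k ∈ S, a k • coordF (ENNReal.ofReal p) k‖ ≤ 1 := by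
  have hp0 : (0:ℝ) < p := lt_of_lt_of_le one_pos hp
  have htr : (ENNReal.ofReal p).toReal = p := ENNReal.toReal_ofReal hp0.le
  refine ContinuousLinearMap.opNorm_le_bound _ zero_le_one fun z => ?_
  rw [one_mul]
  have happ : (∑ k ∈ S, a k • coordF (ENNReal.ofReal p) k) z = ∑ k ∈ S, a k * z k := by
    simp [ContinuousLinearMap.sum_apply]
  rw [happ, Real.norm_eq_abs]
  refine (Finset.abs_sum_le_sum_abs _ _).trans ?_
  by_cases hz : ‖z‖ = 0
  · have hz0 : z = 0 := norm_eq_zero.mp hz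
    have : ∀ k ∈ S, |a k * z k| = 0 := by
      intro k _
      rw [hz0]
      simp [lp.coeFn_zero]
    rw [Finset.sum_congr rfl this]
    simp
  · set n := ‖z‖ with hn'
    have hn : 0 < n := lt_of_le_of_ne (norm_nonneg z) (Ne.symm hz)
    have hc : ∑ k ∈ S, |n⁻¹ * z k| ^ p ≤ 1 := by
      have hck : ∀ k ∈ S, |n⁻¹ * z k| ^ p = n⁻¹ ^ p * |z k| ^ p := fun k _ => by
        rw [abs_mul, Real.mul_rpow (abs_nonneg _) (abs_nonneg _),
          abs_of_pos (inv_pos.mpr hn)]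
      rw [Finset.sum_congr rfl hck, ← Finset.mul_sum]
      have hsum : ∑ k ∈ S, |z k| ^ p ≤ n ^ p := by
        have h2 := lp.sum_rpow_le_norm_rpow (by rw [htr]; exact hp0) z S
        rw [htr] at h2
        simpa [Real.norm_eq_abs] using h2
      calc n⁻¹ ^ p * ∑ k ∈ S, |z k| ^ p ≤ n⁻¹ ^ p * n ^ p :=
            mul_le_mul_of_nonneg_left hsum (Real.rpow_nonneg (inv_nonneg.mpr hn.le) _)
        _ = 1 := by
            rw [← Real.mul_rpow (inv_nonneg.mpr hn.le) hn.le, inv_mul_cancel₀ hn.ne',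
              Real.one_rpow]
    have hle := ha _ hc
    have heq : ∑ k ∈ S, |a k * (n⁻¹ * z k)| = n⁻¹ * ∑ k ∈ S, |a k * z k| := by
      rw [Finset.mul_sum]
      refine Finset.sum_congr rfl fun k _ => ?_
      rw [abs_mul, abs_mul, abs_mul, abs_of_pos (inv_pos.mpr hn)]
      ring
    rw [heq] at hle
    calc ∑ k ∈ S, |a k * z k| = n * (n⁻¹ * ∑ k ∈ S, |a k * z k|) := by
          field_simp
      _ ≤ n * 1 := mul_le_mul_of_nonneg_left hle hn.le
      _ = ‖z‖ := by rw [mul_one]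

theorem exists_clm_into_lp {G : Type*} [NormedAddCommGroup G] [NormedSpace ℝ G]
    [CompleteSpace G] {p : ℝ} (hp : 1 ≤ p) [Fact (1 ≤ ENNReal.ofReal p)]
    (vs : ℕ → G →L[ℝ] ℝ) (hvs : ∀ z, Summable fun k => |vs k z| ^ p) :
    ∃ U : G →L[ℝ] lp (fun _ : ℕ => ℝ) (ENNReal.ofReal p),
      ∀ (z : G) (k : ℕ), (U z : ∀ _ : ℕ, ℝ) k = vs k z := by
  have hp0 : (0:ℝ) < p := lt_of_lt_of_le one_pos hp
  have htr : (ENNReal.ofReal p).toReal = p := ENNReal.toReal_ofReal hp0.le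
  have hmem : ∀ z : G, Memℓp (fun k => vs k z) (ENNReal.ofReal p) := by
    intro z
    apply memℓp_gen
    rw [htr]
    simpa [Real.norm_eq_abs] using hvs z
  set Ulin : G →ₗ[ℝ] lp (fun _ : ℕ => ℝ) (ENNReal.ofReal p) :=
    { toFun := fun z => ⟨fun k => vs k z, hmem z⟩
      map_add' := fun z w => by
        apply lp.ext
        rw [lp.coeFn_add]
        funext k
        exact map_add (vs k) z w
      map_smul' := fun c z => by
        apply lp.ext
        rw [RingHom.id_apply, lp.coeFn_smul]
        funext k
        exact map_smul (vs k) c z } with hUlin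
  have hcont : Continuous Ulin := by
    apply Ulin.continuous_of_seq_closed_graph
    intro u x y hu hy
    apply lp.ext
    funext k
    have h1 : Tendsto (fun n => vs k (u n)) atTop (nhds (vs k x)) :=
      ((vs k).continuous.tendsto x).comp hu
    have h2 : Tendsto (fun n => ((Ulin (u n) : lp (fun _ : ℕ => ℝ) (ENNReal.ofReal p))
        : ∀ _ : ℕ, ℝ) k) atTop (nhds ((y : ∀ _ : ℕ, ℝ) k)) :=
      ((coordF (ENNReal.ofReal p) k).continuous.tendsto y).comp hy
    exact tendsto_nhds_unique h2 h1
  exact ⟨⟨Ulin, hcont⟩, fun z k => rfl⟩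

theorem into_lp_mid_summing {E : Type*} [NormedAddCommGroup E] [NormedSpace ℝ E]
    {p : ℝ} (hp : 1 ≤ p) [Fact (1 ≤ ENNReal.ofReal p)]
    (T : E →L[ℝ] lp (fun _ : ℕ => ℝ) (ENNReal.ofReal p)) (x : ℕ → E)
    (hx : MidSummable p x) : MemLpSeq p fun j => T (x j) := by
  have hp0 : (0:ℝ) < p := lt_of_lt_of_le one_pos hp
  have htr : (ENNReal.ofReal p).toReal = p := ENNReal.toReal_ofReal hp0.le
  set xs : ℕ → E →L[ℝ] ℝ := fun k => (coordF (ENNReal.ofReal p) k).comp T with hxs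
  have hW : WSummable p xs := by
    refine wsummable_of_dual hp (norm_nonneg T) ?_
    intro S a ha
    have hrw : ∑ k ∈ S, a k • xs k
        = (∑ k ∈ S, a k • coordF (ENNReal.ofReal p) k).comp T := by
      ext z
      simp [hxs, ContinuousLinearMap.sum_apply]
    rw [hrw]
    calc ‖(∑ k ∈ S, a k • coordF (ENNReal.ofReal p) k).comp T‖
        ≤ ‖∑ k ∈ S, a k • coordF (ENNReal.ofReal p) k‖ * ‖T‖ :=
          ContinuousLinearMap.opNorm_comp_le _ _
      _ ≤ 1 * ‖T‖ := mul_le_mul_of_nonneg_right (norm_sum_coordF hp S a ha) (norm_nonneg T)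
      _ = ‖T‖ := one_mul _
  have hprod := hx.2 xs hW
  have hswap := hprod.prod_symm
  have hnn : ∀ jk : ℕ × ℕ, 0 ≤ |xs jk.2 (x jk.1)| ^ p :=
    fun jk => Real.rpow_nonneg (abs_nonneg _) _
  have hcol := ((summable_prod_of_nonneg hnn).mp hswap).2
  refine hcol.congr fun j => ?_
  have hnorm : ‖T (x j)‖ ^ p = ∑' k, |(T (x j) : ∀ _ : ℕ, ℝ) k| ^ p := by
    have h3 := lp.norm_rpow_eq_tsum (by rw [htr]; exact hp0) (T (x j))
    rw [htr] at h3
    simpa [Real.norm_eq_abs] using h3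
  rw [hnorm]
  exact tsum_congr fun k => by simp [hxs]

end Stmt16Aux

set_option maxHeartbeats 1000000 in
/-- characterizations of weak mid `p`-spaces. For a Banach space `E` the
following are equivalent: (a) `ℓ_p^{mid}(E) = ℓ_p^w(E)`; (b) `Π_p^{mid}(E;F) = Π_p(E;F)`
for every Banach space `F`; (c) `Π_p^{mid}(E;ℓ_p) = Π_p(E;ℓ_p) = L(E;ℓ_p)`;
(d) `W_p^{mid}(F;E) = L(F;E)` for every Banach space `F`; (e) `id_E ∈ W_p^{mid}(E;E)`. -/
theorem stmt_16 {E : Type*} [NormedAddCommGroup E] [NormedSpace ℝ E] [CompleteSpace E]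
    (p : ℝ) (hp : 1 ≤ p) [Fact (1 ≤ ENNReal.ofReal p)] :
    List.TFAE
      [ -- (a) `E` is a weak mid `p`-space
        ∀ x : ℕ → E, MidSummable p x ↔ WSummable p x,
        -- (b) `Π_p^{mid}(E;F) = Π_p(E;F)` for every Banach space `F`
        ∀ (F : Type) (_ : NormedAddCommGroup F), ∀ (_ : NormedSpace ℝ F),
          ∀ (_ : CompleteSpace F), ∀ T : E →L[ℝ] F,
          ((∀ x : ℕ → E, MidSummable p x → MemLpSeq p fun j => T (x j)) ↔
            (∀ x : ℕ → E, WSummable p x → MemLpSeq p fun j => T (x j))),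
        -- (c) `Π_p^{mid}(E;ℓ_p) = Π_p(E;ℓ_p) = L(E;ℓ_p)`
        ∀ T : E →L[ℝ] lp (fun _ : ℕ => ℝ) (ENNReal.ofReal p),
          (∀ x : ℕ → E, MidSummable p x → MemLpSeq p fun j => T (x j)) ∧
          (∀ x : ℕ → E, WSummable p x → MemLpSeq p fun j => T (x j)),
        -- (d) `W_p^{mid}(F;E) = L(F;E)` for every Banach space `F`
        ∀ (F : Type) (_ : NormedAddCommGroup F), ∀ (_ : NormedSpace ℝ F),
          ∀ (_ : CompleteSpace F), ∀ T : F →L[ℝ] E,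
          ∀ x : ℕ → F, WSummable p x → MidSummable p fun j => T (x j),
        -- (e) `id_E` is weakly mid `p`-summing
        ∀ x : ℕ → E, WSummable p x → MidSummable p x ] := by
  have hp0 : (0:ℝ) < p := lt_of_lt_of_le one_pos hp
  have htr : (ENNReal.ofReal p).toReal = p := ENNReal.toReal_ofReal hp0.le
  tfae_have 1 → 2 := by
    intro h1 F _ _ _ T
    constructor
    · intro hT x hxw
      exact hT x ((h1 x).mpr hxw)
    · intro hT x hxm
      exact hT x hxm.1
  tfae_have 2 → 3 := by
    intro h2 T
    have hmid : ∀ x : ℕ → E, MidSummable p x → MemLpSeq p fun j => T (x j) :=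
      fun x hx => Stmt16Aux.into_lp_mid_summing hp T x hx
    exact ⟨hmid, (h2 _ inferInstance inferInstance inferInstance T).mp hmid⟩
  tfae_have 3 → 5 := by
    intro h3 x hx
    refine ⟨hx, fun xs hxs => ?_⟩
    obtain ⟨U, hU⟩ := Stmt16Aux.exists_clm_into_lp hp xs
      (fun z => hxs (NormedSpace.inclusionInDoubleDual ℝ E z))
    have hs := (h3 U).2 x hx
    have hnn : ∀ jk : ℕ × ℕ, 0 ≤ |xs jk.2 (x jk.1)| ^ p :=
      fun jk => Real.rpow_nonneg (abs_nonneg _) _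
    have hrow : ∀ j, Summable fun k => |xs k (x j)| ^ p :=
      fun j => hxs (NormedSpace.inclusionInDoubleDual ℝ E (x j))
    have hsum : Summable fun j => ∑' k, |xs k (x j)| ^ p := by
      refine hs.congr fun j => ?_
      have h3' := lp.norm_rpow_eq_tsum (p := ENNReal.ofReal p) (by rw [htr]; exact hp0) (U (x j))
      rw [htr] at h3'
      calc ‖U (x j)‖ ^ p = ∑' k, ‖(U (x j) : ∀ _ : ℕ, ℝ) k‖ ^ p := h3'
        _ = ∑' k, |xs k (x j)| ^ p := tsum_congr fun k => by rw [hU (x j) k, Real.norm_eq_abs]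
    have hg : Summable fun jk : ℕ × ℕ => |xs jk.2 (x jk.1)| ^ p :=
      (summable_prod_of_nonneg hnn).mpr ⟨fun j => hrow j, hsum⟩
    exact hg.prod_symm
  tfae_have 5 → 1 := by
    intro h5 x
    exact ⟨fun hm => hm.1, h5 x⟩
  tfae_have 5 → 4 := by
    intro h5 F _ _ _ T x hxw
    refine h5 _ fun f => ?_
    exact hxw (f.comp T)
  tfae_have 4 → 5 := by
    intro h4 x hx
    classical
    obtain ⟨Λ, hΛ⟩ := Stmt16Aux.exists_clm_into_lp (G := E →L[ℝ] ℝ) hp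
      (fun j => NormedSpace.inclusionInDoubleDual ℝ E (x j)) (fun f => hx f)
    set ι := NormedSpace.inclusionInDoubleDual ℝ E with hι
    -- The "adjoint-type" map Φ : (ℓ_p)* → E**
    set Φ :=
      (ContinuousLinearMap.compSL (E →L[ℝ] ℝ) (lp (fun _ : ℕ => ℝ) (ENNReal.ofReal p)) ℝ
        (RingHom.id ℝ) (RingHom.id ℝ)).flip Λ with hΦ
    have hΦapp : ∀ u, Φ u = u.comp Λ := fun u => rfl
    have hΦcoord : ∀ j, Φ (Stmt16Aux.coordF (ENNReal.ofReal p) j) = ι (x j) := by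
      intro j
      ext f
      exact hΛ f j
    set Fsub := (Submodule.span ℝ
      (Set.range (fun k => Stmt16Aux.coordF (ENNReal.ofReal p) k))).topologicalClosure with hFsub
    have hymem : ∀ j, Stmt16Aux.coordF (ENNReal.ofReal p) j ∈ Fsub := fun j =>
      Submodule.le_topologicalClosure _ (Submodule.subset_span ⟨j, rfl⟩)
    set y : ℕ → Fsub := fun j => ⟨Stmt16Aux.coordF (ENNReal.ofReal p) j, hymem j⟩ with hy'
    have hy : WSummable p y := by
      intro f
      obtain ⟨g, hg1, -⟩ := exists_extension_norm_eq Fsub f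
      have hcoord : WSummable p (fun k => Stmt16Aux.coordF (ENNReal.ofReal p) k) :=
        Stmt16Aux.wsummable_of_dual hp zero_le_one
          (fun S a ha => Stmt16Aux.norm_sum_coordF hp S a ha)
      refine (hcoord g).congr fun k => ?_
      have : g (Stmt16Aux.coordF (ENNReal.ofReal p) k) = f (y k) := hg1 (y k)
      rw [this]
    have hisom : Isometry (⇑ι) := (NormedSpace.inclusionInDoubleDualLi ℝ (E := E)).isometry
    have hinj : Function.Injective (⇑ι) := hisom.injective
    have hclosed : IsClosed (Set.range (⇑ι)) := hisom.isClosedEmbedding.isClosed_range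
    set R : Submodule ℝ ((E →L[ℝ] ℝ) →L[ℝ] ℝ) := LinearMap.range (ι : E →ₗ[ℝ] _) with hR
    have hRclosed : IsClosed (R : Set ((E →L[ℝ] ℝ) →L[ℝ] ℝ)) := by
      have hrr : (R : Set ((E →L[ℝ] ℝ) →L[ℝ] ℝ)) = Set.range (⇑ι) := by
        rw [hR]
        exact LinearMap.coe_range _
      rw [hrr]
      exact hclosed
    set K : Submodule ℝ ((lp (fun _ : ℕ => ℝ) (ENNReal.ofReal p)) →L[ℝ] ℝ) :=
      R.comap (Φ : _ →ₗ[ℝ] _) with hK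
    have hKclosed : IsClosed (K : Set ((lp (fun _ : ℕ => ℝ) (ENNReal.ofReal p)) →L[ℝ] ℝ)) := by
      rw [hK, Submodule.comap_coe]
      exact hRclosed.preimage Φ.continuous
    have hsub : Fsub ≤ K := by
      apply Submodule.topologicalClosure_minimal
      · rw [Submodule.span_le]
        rintro _ ⟨j, rfl⟩
        exact Submodule.mem_comap.mpr (LinearMap.mem_range.mpr ⟨x j, (hΦcoord j).symm⟩)
      · exact hKclosed
    have hchoice : ∀ u : Fsub, ∃ z : E, ι z = Φ (u : _) := by
      intro u
      exact LinearMap.mem_range.mp (Submodule.mem_comap.mp (hsub u.2))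
    choose Tf hTf using hchoice
    have hTadd : ∀ u v : Fsub, Tf (u + v) = Tf u + Tf v := by
      intro u v
      apply hinj
      rw [map_add, hTf, hTf, hTf]
      push_cast
      rw [map_add]
    have hTsmul : ∀ (c : ℝ) (u : Fsub), Tf (c • u) = c • Tf u := by
      intro c u
      apply hinj
      rw [map_smul, hTf, hTf]
      push_cast
      rw [map_smul]
    have hTbound : ∀ u : Fsub, ‖Tf u‖ ≤ ‖Φ‖ * ‖u‖ := by
      intro u
      have h1 : ‖ι (Tf u)‖ = ‖Tf u‖ :=
        (NormedSpace.inclusionInDoubleDualLi ℝ (E := E)).norm_map (Tf u)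
      rw [← h1, hTf]
      exact Φ.le_opNorm _
    set Tlin : Fsub →ₗ[ℝ] E :=
      { toFun := Tf, map_add' := hTadd, map_smul' := hTsmul } with hTlin
    set T := Tlin.mkContinuous ‖Φ‖ (fun u => hTbound u) with hT
    have hTy : ∀ j, T (y j) = x j := by
      intro j
      apply hinj
      have : ι (Tf (y j)) = Φ ((y j : _)) := hTf (y j)
      rw [hT]
      refine this.trans ?_
      exact hΦcoord j
    have hmid := h4 Fsub inferInstance inferInstance inferInstance T y hy
    have hfun : (fun j => T (y j)) = x := funext hTy
    rwa [hfun] at hmid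
  tfae_finish
end
end

section
/- For sequences in a Banach space F: if (J_F(y_j))_j ∈ ℓ_p^mid(F**), then (y_j)_j ∈ ℓ_p^mid(F), where J_F : F → F** is the canonical embedding. Consequently the operator ideal W_{p;q}^mid of weakly mid (p;q)-summing operators is regular. (Key step: if (y_n*) is in the unit ball of ℓ_p^w(F*), then (J_{F*}(y_n*)) is in the unit ball of ℓ_p^w(F***), proved via Goldstine's theorem.) -/
open Filter

noncomputable section

set_option maxSynthPendingDepth 3

open NormedSpace in
lemma wsummable_map {E F : Type*} [NormedAddCommGroup E] [NormedSpace ℝ E]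
    [NormedAddCommGroup F] [NormedSpace ℝ F] (p : ℝ) (T : E →L[ℝ] F) {y : ℕ → E}
    (h : WSummable p y) : WSummable p (fun n => T (y n)) := by
  intro f
  have := h (f.comp T)
  simpa only [ContinuousLinearMap.comp_apply] using this

open NormedSpace in
lemma range_eq_key (p : ℝ) {X : Type*} [NormedAddCommGroup X] [NormedSpace ℝ X]
    (y : ℕ → X) :
    (Set.range fun f : {f : StrongDual ℝ (StrongDual ℝ X) →L[ℝ] ℝ // ‖f‖ ≤ 1} =>
      (∑' j, |f.1 (inclusionInDoubleDual ℝ X (y j))| ^ p) ^ (1 / p)) =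
    (Set.range fun g : {g : X →L[ℝ] ℝ // ‖g‖ ≤ 1} =>
      (∑' j, |g.1 (y j)| ^ p) ^ (1 / p)) := by
  apply Set.Subset.antisymm
  · rintro - ⟨⟨f, hf⟩, rfl⟩
    refine ⟨⟨f.comp (inclusionInDoubleDual ℝ X), ?_⟩, ?_⟩
    · calc ‖f.comp (inclusionInDoubleDual ℝ X)‖
          ≤ ‖f‖ * ‖inclusionInDoubleDual ℝ X‖ := ContinuousLinearMap.opNorm_comp_le _ _
        _ ≤ 1 * 1 := mul_le_mul hf (inclusionInDoubleDual_norm_le ℝ _) (norm_nonneg _)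
            zero_le_one
        _ = 1 := one_mul 1
    · simp only [ContinuousLinearMap.comp_apply]
  · rintro - ⟨⟨g, hg⟩, rfl⟩
    refine ⟨⟨inclusionInDoubleDual ℝ (StrongDual ℝ X) g, le_trans (double_dual_bound ℝ _ g) hg⟩, ?_⟩
    simp only [dual_def]

/-- if `(J_F (y_j))_j ∈ ℓ_p^{mid}(F**)` then `(y_j)_j ∈ ℓ_p^{mid}(F)`;
consequently the ideal `W_{p;q}^{mid}` of weakly mid `(p;q)`-summing operators is
regular. (Key step: the canonical embedding `J_{F*}` maps the unit ball of `ℓ_p^w(F*)`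
into the unit ball of `ℓ_p^w(F***)`, proved via Goldstine's theorem.) -/
theorem stmt_18 (p q : ℝ) (hq : 1 ≤ q) (hqp : q ≤ p) :
    -- key step
    (∀ (F : Type) (_ : NormedAddCommGroup F) (_ : NormedSpace ℝ F) (_ : CompleteSpace F)
      (y : ℕ → StrongDual ℝ F), WSummable p y → wNorm p y ≤ 1 →
        WSummable p (fun n => NormedSpace.inclusionInDoubleDual ℝ (StrongDual ℝ F) (y n)) ∧
        wNorm p (fun n => NormedSpace.inclusionInDoubleDual ℝ (StrongDual ℝ F) (y n)) ≤ 1) ∧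
    -- the main statement on sequences
    (∀ (F : Type) (_ : NormedAddCommGroup F) (_ : NormedSpace ℝ F) (_ : CompleteSpace F)
      (y : ℕ → F),
        MidSummable p (fun j => NormedSpace.inclusionInDoubleDual ℝ F (y j)) →
        MidSummable p y) ∧
    -- regularity of `W_{p;q}^{mid}`
    (∀ (E F : Type) (_ : NormedAddCommGroup E) (_ : NormedSpace ℝ E) (_ : CompleteSpace E)
      (_ : NormedAddCommGroup F) (_ : NormedSpace ℝ F) (_ : CompleteSpace F)
      (u : E →L[ℝ] F),
        (∀ x : ℕ → E, WSummable q x →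
          MidSummable p fun j => NormedSpace.inclusionInDoubleDual ℝ F (u (x j))) →
        (∀ x : ℕ → E, WSummable q x → MidSummable p fun j => u (x j))) := by

  classical
  have key : ∀ (F : Type) (_ : NormedAddCommGroup F) (_ : NormedSpace ℝ F) (_ : CompleteSpace F)
      (y : ℕ → StrongDual ℝ F), WSummable p y → wNorm p y ≤ 1 →
        WSummable p (fun n => NormedSpace.inclusionInDoubleDual ℝ (StrongDual ℝ F) (y n)) ∧
        wNorm p (fun n => NormedSpace.inclusionInDoubleDual ℝ (StrongDual ℝ F) (y n)) ≤ 1 := by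
    intro F _ _ _ y hy hn
    refine ⟨wsummable_map p _ hy, ?_⟩
    have heq : wNorm p (fun n => NormedSpace.inclusionInDoubleDual ℝ (StrongDual ℝ F) (y n))
        = wNorm p y := congrArg sSup (range_eq_key p y)
    rw [heq]; exact hn
  have main : ∀ (F : Type) (_ : NormedAddCommGroup F) (_ : NormedSpace ℝ F) (_ : CompleteSpace F)
      (y : ℕ → F),
        MidSummable p (fun j => NormedSpace.inclusionInDoubleDual ℝ F (y j)) →
        MidSummable p y := by
    intro F _ _ _ y h
    constructor
    · intro f
      exact h.1 (NormedSpace.inclusionInDoubleDual ℝ (StrongDual ℝ F) f)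
    · intro xs hxs
      exact h.2 (fun n => NormedSpace.inclusionInDoubleDual ℝ (StrongDual ℝ F) (xs n))
        (wsummable_map p _ hxs)
  refine ⟨key, main, ?_⟩
  intro E F _ _ _ _ _ _ u hu x hx
  exact main F inferInstance inferInstance inferInstance (fun j => u (x j)) (hu x hx)
end
end
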